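/- arXiv:2502.08286 — 5 statements merged into one kernel-verified Lean document; each statement's English description precedes it below -/
import Mathlib

section
/- Assume X and Y are nonempty and bounded. For y ∈ ℝ^m let U(y) = {u ∈ ℝ^q : u ≥ 0, −Aᵀu ≤ C y + g}. If (x*, y*) ∈ X × Y minimizes z over X × Y with optimal value z*, then z* = min_{y ∈ Y} max_{u ∈ U(y)} (e·y − a·u) and z* = max_{u ∈ U(y*)} (e·y* − a·u). Conversely, if z* = min_{y ∈ Y} max_{u ∈ U(y)} (e·y − a·u) is attained at y* ∈ Y, then z* is the minimum of z over X × Y and there exists x* ∈ X with z(x*, y*) = z*. -/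
open Matrix Finset

section Cone
variable {E : Type*} [NormedAddCommGroup E] [InnerProductSpace ℝ E]
variable {ι : Type*} [Fintype ι]

/-- membership in the cone generated by `v` with coefficients supported on `s` -/
def InConeOn (v : ι → E) (s : Finset ι) (x : E) : Prop :=
  ∃ c : ι → ℝ, (∀ i, 0 ≤ c i) ∧ (∀ i ∉ s, c i = 0) ∧ ∑ i, c i • v i = x

lemma sum_eq_sum_subtype (t : Finset ι) (f : ι → E) (h : ∀ i ∉ t, f i = 0) :
    ∑ i, f i = ∑ i : t, f (i : ι) := by
  rw [Finset.sum_coe_sort t f]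
  exact (Finset.sum_subset (Finset.subset_univ t) (fun i _ hi => h i hi)).symm

lemma caratheodory (v : ι → E) :
    ∀ (s : Finset ι) (x : E), InConeOn v s x →
      ∃ t : Finset ι, LinearIndependent ℝ (fun i : t => v i) ∧ InConeOn v t x := by
  intro s
  induction s using Finset.strongInduction with
  | _ s ih =>
    intro x hx
    by_cases hli : LinearIndependent ℝ (fun i : s => v i)
    · exact ⟨s, hli, hx⟩
    obtain ⟨c, hc0, hcs, hcsum⟩ := hx
    rw [Fintype.linearIndependent_iff] at hli
    push_neg at hli
    obtain ⟨g, hg0, j, hgj⟩ := hli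
    classical
    -- extend g to ι
    set μ0 : ι → ℝ := fun i => if h : i ∈ s then g ⟨i, h⟩ else 0 with hμ0
    have hμ0sum : ∑ i, μ0 i • v i = 0 := by
      rw [sum_eq_sum_subtype s (fun i => μ0 i • v i)
        (fun i hi => by simp [hμ0, dif_neg hi])]
      rw [← hg0]
      exact Finset.sum_congr rfl (fun i _ => by simp [hμ0, dif_pos i.2])
    have hμ0j : μ0 (j : ι) ≠ 0 := by simpa [hμ0, dif_pos j.2] using hgj
    -- wlog there is a positive coefficient
    obtain ⟨μ, hμsum, hμsupp, i₀', hi₀'s, hi₀'pos⟩ :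
        ∃ μ : ι → ℝ, (∑ i, μ i • v i = 0) ∧ (∀ i ∉ s, μ i = 0) ∧
          ∃ i₀ ∈ s, 0 < μ i₀ := by
      by_cases hpos : ∃ i ∈ s, 0 < μ0 i
      · exact ⟨μ0, hμ0sum, fun i hi => by simp [hμ0, dif_neg hi], hpos⟩
      · push_neg at hpos
        refine ⟨-μ0, by simp [hμ0sum], fun i hi => by simp [hμ0, dif_neg hi], j, j.2, ?_⟩
        have := hpos j j.2
        simp only [Pi.neg_apply]
        cases lt_or_eq_of_le this with
        | inl h => linarith
        | inr h => exact absurd h hμ0j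
    -- choose minimizing index
    have hPne : (s.filter (fun i => 0 < μ i)).Nonempty := ⟨i₀', by simp [hi₀'s, hi₀'pos]⟩
    obtain ⟨i₀, hi₀P, hi₀min⟩ :=
      Finset.exists_min_image (s.filter (fun i => 0 < μ i)) (fun i => c i / μ i) hPne
    have hi₀s : i₀ ∈ s := (Finset.mem_filter.mp hi₀P).1
    have hμi₀ : 0 < μ i₀ := (Finset.mem_filter.mp hi₀P).2
    set t' : ℝ := c i₀ / μ i₀ with ht'
    have ht'0 : 0 ≤ t' := div_nonneg (hc0 i₀) hμi₀.le
    set c' : ι → ℝ := fun i => c i - t' * μ i with hc'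
    have hc'0 : ∀ i, 0 ≤ c' i := by
      intro i
      rcases le_or_gt (μ i) 0 with h | h
      · have : t' * μ i ≤ 0 := mul_nonpos_of_nonneg_of_nonpos ht'0 h
        simp only [hc']; linarith [hc0 i]
      · have his : i ∈ s := by
          by_contra hns; rw [hμsupp i hns] at h; exact lt_irrefl 0 h
        have := hi₀min i (Finset.mem_filter.mpr ⟨his, h⟩)
        have : t' * μ i ≤ c i := by
          rw [← le_div_iff₀ h]; exact this
        simp only [hc']; linarith
    have hc'i₀ : c' i₀ = 0 := by
      simp only [hc', ht']
      field_simp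
      ring
    have hc'supp : ∀ i ∉ s.erase i₀, c' i = 0 := by
      intro i hi
      by_cases hii : i = i₀
      · rw [hii]; exact hc'i₀
      · have his : i ∉ s := fun his => hi (Finset.mem_erase.mpr ⟨hii, his⟩)
        simp only [hc', hcs i his, hμsupp i his]; ring
    have hc'sum : ∑ i, c' i • v i = x := by
      simp only [hc', sub_smul, mul_smul]
      rw [Finset.sum_sub_distrib, ← Finset.smul_sum, hμsum, smul_zero, sub_zero, hcsum]
    exact ih (s.erase i₀) (Finset.erase_ssubset hi₀s) x ⟨c', hc'0, hc'supp, hc'sum⟩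

lemma isClosed_inConeOn (v : ι → E) (t : Finset ι)
    (hli : LinearIndependent ℝ (fun i : t => v i)) :
    IsClosed {x : E | InConeOn v t x} := by
  classical
  let L : ((i : t) → ℝ) →ₗ[ℝ] E :=
    { toFun := fun c => ∑ i : t, c i • v (i : ι)
      map_add' := by intro a b; simp [add_smul, Finset.sum_add_distrib]
      map_smul' := by intro r a; simp [smul_smul, Finset.smul_sum] }
    -- injective
  have hker : LinearMap.ker L = ⊥ := by
    rw [LinearMap.ker_eq_bot']
    intro c hc
    funext i
    exact Fintype.linearIndependent_iff.mp hli c hc i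
  have hemb := LinearMap.isClosedEmbedding_of_injective hker (f := L)
  have hset : {x : E | InConeOn v t x} = L '' {c | ∀ i, 0 ≤ c i} := by
    ext x
    constructor
    · rintro ⟨c, hc0, hcs, hcsum⟩
      refine ⟨fun i => c i, fun i => hc0 i, ?_⟩
      show ∑ i : t, c (i : ι) • v (i : ι) = x
      rw [← hcsum]
      exact (sum_eq_sum_subtype t (fun i => c i • v i)
        (fun i hi => by simp [hcs i hi])).symm
    · rintro ⟨c, hc0, rfl⟩
      refine ⟨fun i => if h : i ∈ t then c ⟨i, h⟩ else 0,
        fun i => ?_, fun i hi => by simp [hi], ?_⟩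
      · by_cases h : i ∈ t
        · simpa [h] using hc0 ⟨i, h⟩
        · simp [h]
      rw [sum_eq_sum_subtype t _ (fun i hi => by simp [hi])]
      exact Finset.sum_congr rfl (fun i _ => by simp [i.2])
  rw [hset]
  refine hemb.isClosedMap _ ?_
  have : {c : (i : t) → ℝ | ∀ i, 0 ≤ c i} = ⋂ i, {c | 0 ≤ c i} := by
    ext c; simp
  rw [this]
  exact isClosed_iInter fun i => isClosed_le continuous_const (continuous_apply i)

lemma isClosed_cone (v : ι → E) :
    IsClosed {x : E | ∃ c : ι → ℝ, (∀ i, 0 ≤ c i) ∧ ∑ i, c i • v i = x} := by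
  classical
  have : {x : E | ∃ c : ι → ℝ, (∀ i, 0 ≤ c i) ∧ ∑ i, c i • v i = x} =
      ⋃ t ∈ {t : Finset ι | LinearIndependent ℝ (fun i : t => v i)},
        {x | InConeOn v t x} := by
    ext x
    simp only [Set.mem_setOf_eq, Set.mem_iUnion]
    constructor
    · rintro ⟨c, hc0, hcsum⟩
      obtain ⟨t, hli, hmem⟩ := caratheodory v Finset.univ x
        ⟨c, hc0, fun i hi => absurd (Finset.mem_univ i) hi, hcsum⟩
      exact ⟨t, hli, hmem⟩
    · rintro ⟨t, _, c, hc0, _, hcsum⟩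
      exact ⟨c, hc0, hcsum⟩
  rw [this]
  exact Set.Finite.isClosed_biUnion (Set.toFinite _)
    (fun t ht => isClosed_inConeOn v t ht)

end Cone

section Farkas
variable {ι κ : Type*} [Fintype ι] [Fintype κ]


lemma cone_separation {E : Type*} [NormedAddCommGroup E] [InnerProductSpace ℝ E]
    [CompleteSpace E] (v : ι → E) (d : E)
    (hd : ¬ ∃ c : ι → ℝ, (∀ i, 0 ≤ c i) ∧ ∑ i, c i • v i = d) :
    ∃ y : E, (∀ j, 0 ≤ (inner ℝ (v j) y : ℝ)) ∧ (inner ℝ y d : ℝ) < 0 := by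
  classical
  let K : ConvexCone ℝ E :=
    { carrier := {x | ∃ c : ι → ℝ, (∀ i, 0 ≤ c i) ∧ ∑ i, c i • v i = x}
      smul_mem' := by
        rintro r hr x ⟨c, hc0, rfl⟩
        exact ⟨fun i => r * c i, fun i => mul_nonneg hr.le (hc0 i),
          by simp [mul_smul, ← Finset.smul_sum]⟩
      add_mem' := by
        rintro x ⟨c, hc0, rfl⟩ y ⟨c', hc'0, rfl⟩
        exact ⟨fun i => c i + c' i, fun i => add_nonneg (hc0 i) (hc'0 i),
          by simp [add_smul, Finset.sum_add_distrib]⟩ }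
  have hne : (K : Set E).Nonempty := ⟨0, ⟨fun _ => 0, fun i => le_refl 0, by simp⟩⟩
  have hcl : IsClosed (K : Set E) := isClosed_cone v
  have hdK : d ∉ K := hd
  let P : ProperCone ℝ E :=
    { carrier := (K : Set E)
      zero_mem' := ⟨fun _ => 0, fun i => le_refl 0, by simp⟩
      add_mem' := fun hx hy => K.add_mem hx hy
      smul_mem' := by
        rintro r x ⟨c, hc0, rfl⟩
        exact ⟨fun i => (r : ℝ) * c i, fun i => mul_nonneg r.2 (hc0 i),
          by simp [mul_smul, ← Finset.smul_sum, NNReal.smul_def]⟩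
      isClosed' := hcl }
  have hdP : d ∉ P := hd
  obtain ⟨y, h1, h2⟩ :=
    P.hyperplane_separation' hdP
  refine ⟨y, fun j => h1 _ ?_, by rw [real_inner_comm]; exact h2⟩
  exact ⟨fun i => if i = j then 1 else 0, fun i => by positivity, by simp [ite_smul]⟩

lemma farkas [DecidableEq ι] (M : Matrix ι κ ℝ) (d : ι → ℝ)
    (h : ¬ ∃ u : κ → ℝ, (∀ j, 0 ≤ u j) ∧ M.mulVec u ≤ d) :
    ∃ w : ι → ℝ, (∀ i, 0 ≤ w i) ∧ (∀ j, 0 ≤ Mᵀ.mulVec w j) ∧ d ⬝ᵥ w < 0 := by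
  classical
  set E := EuclideanSpace ℝ ι with hE
  set φ : (ι → ℝ) ≃ₗ[ℝ] E := (WithLp.linearEquiv 2 ℝ (ι → ℝ)).symm with hφ
  set gen : κ ⊕ ι → (ι → ℝ) :=
    Sum.elim (fun j => fun i => M i j) (fun i₀ => Pi.single i₀ 1) with hgen
  set v : κ ⊕ ι → E := fun j => φ (gen j) with hv
  have key : ∀ c : κ ⊕ ι → ℝ, ∑ j, c j • v j = φ (∑ j, c j • gen j) := by
    intro c; rw [map_sum]; simp [hv]
  have eval : ∀ (c : κ ⊕ ι → ℝ) (i : ι),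
      (∑ j, c j • gen j) i = M.mulVec (fun j => c (Sum.inl j)) i + c (Sum.inr i) := by
    intro c i
    rw [Finset.sum_apply, Fintype.sum_sum_type]
    congr 1
    · rw [Matrix.mulVec, dotProduct]
      exact Finset.sum_congr rfl fun j _ => by simp [hgen, mul_comm]
    · rw [Finset.sum_eq_single i (fun i' _ hne => by
        simp [hgen, Pi.single_apply, Ne.symm hne]) (by simp)]
      simp [hgen]
  have hd : ¬ ∃ c : κ ⊕ ι → ℝ, (∀ i, 0 ≤ c i) ∧ ∑ j, c j • v j = φ d := by
    rintro ⟨c, hc0, hsum⟩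
    rw [key] at hsum
    have hsum' : ∑ j, c j • gen j = d := φ.injective hsum
    refine h ⟨fun j => c (Sum.inl j), fun j => hc0 _, fun i => ?_⟩
    have := eval c i
    rw [hsum'] at this
    have h2 := hc0 (Sum.inr i)
    linarith
  obtain ⟨y, h1, h2⟩ := cone_separation v (φ d) hd
  set w : ι → ℝ := φ.symm y with hw
  have inner_eq : ∀ a : ι → ℝ, (inner ℝ (φ a) y : ℝ) = ∑ i, a i * w i := by
    intro a
    rw [PiLp.inner_apply]
    refine Finset.sum_congr rfl fun i _ => ?_
    rw [RCLike.inner_apply, conj_trivial]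
    exact mul_comm _ _
  refine ⟨w, ?_, ?_, ?_⟩
  · intro i
    have := h1 (Sum.inr i)
    rw [hv, inner_eq] at this
    calc (0:ℝ) ≤ ∑ i', gen (Sum.inr i) i' * w i' := this
      _ = w i := by
          rw [Finset.sum_eq_single i (fun i' _ hne => by
            simp [hgen, Pi.single_apply, Ne.symm hne]) (by simp)]
          simp [hgen]
  · intro j
    have := h1 (Sum.inl j)
    rw [hv, inner_eq] at this
    calc (0:ℝ) ≤ ∑ i, gen (Sum.inl j) i * w i := this
      _ = Mᵀ.mulVec w j := by
          rw [Matrix.mulVec, dotProduct]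
          exact Finset.sum_congr rfl fun i _ => by simp [hgen, Matrix.transpose_apply]
  · have : (inner ℝ y (φ d) : ℝ) = d ⬝ᵥ w := by
      rw [real_inner_comm, inner_eq, dotProduct]
    linarith [h2, this.symm.le]

end Farkas

section LP
variable {ν : Type*} [Fintype ν]

lemma dot_mono_right {p q x : ν → ℝ} (h : p ≤ q) (hx : 0 ≤ x) :
    p ⬝ᵥ x ≤ q ⬝ᵥ x :=
  Finset.sum_le_sum fun i _ => mul_le_mul_of_nonneg_right (h i) (hx i)

lemma dot_mono_left {u p q : ν → ℝ} (h : p ≤ q) (hu : 0 ≤ u) :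
    u ⬝ᵥ p ≤ u ⬝ᵥ q :=
  Finset.sum_le_sum fun i _ => mul_le_mul_of_nonneg_left (h i) (hu i)

lemma dot_continuous (c : ν → ℝ) : Continuous (fun x : ν → ℝ => c ⬝ᵥ x) := by
  have : (fun x : ν → ℝ => c ⬝ᵥ x) = fun x => ∑ i, c i * x i := rfl
  rw [this]
  exact continuous_finset_sum _ fun i _ => continuous_const.mul (continuous_apply i)

lemma lp_duality {n q : ℕ} (A : Matrix (Fin q) (Fin n) ℝ) (a : Fin q → ℝ) (c : Fin n → ℝ)
    (hne : Set.Nonempty {x : Fin n → ℝ | A.mulVec x ≤ a ∧ 0 ≤ x})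
    (hbd : Bornology.IsBounded {x : Fin n → ℝ | A.mulVec x ≤ a ∧ 0 ≤ x}) :
    ∃ xs, (A.mulVec xs ≤ a ∧ 0 ≤ xs) ∧
      (∀ x, A.mulVec x ≤ a → 0 ≤ x → c ⬝ᵥ xs ≤ c ⬝ᵥ x) ∧
      (∃ u : Fin q → ℝ, 0 ≤ u ∧ -(Aᵀ.mulVec u) ≤ c ∧ -(a ⬝ᵥ u) = c ⬝ᵥ xs) ∧
      (∀ u : Fin q → ℝ, 0 ≤ u → -(Aᵀ.mulVec u) ≤ c → -(a ⬝ᵥ u) ≤ c ⬝ᵥ xs) := by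
  classical
  set X := {x : Fin n → ℝ | A.mulVec x ≤ a ∧ 0 ≤ x} with hXdef
  have h1 : IsClosed {x : Fin n → ℝ | A.mulVec x ≤ a} := by
    have he : {x : Fin n → ℝ | A.mulVec x ≤ a} = ⋂ i, {x | A.mulVec x i ≤ a i} := by
      ext x; simp [Pi.le_def]
    rw [he]
    refine isClosed_iInter fun i => isClosed_le ?_ continuous_const
    have : (fun x : Fin n → ℝ => A.mulVec x i) = fun x => (fun j => A i j) ⬝ᵥ x := rfl
    rw [this]; exact dot_continuous _
  have h2 : IsClosed {x : Fin n → ℝ | 0 ≤ x} := by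
    have he : {x : Fin n → ℝ | 0 ≤ x} = ⋂ i, {x | 0 ≤ x i} := by
      ext x; simp [Pi.le_def]
    rw [he]
    exact isClosed_iInter fun i => isClosed_le continuous_const (continuous_apply i)
  have hXclosed : IsClosed X := by
    have : X = {x : Fin n → ℝ | A.mulVec x ≤ a} ∩ {x : Fin n → ℝ | 0 ≤ x} := rfl
    rw [this]; exact h1.inter h2
  have hXcompact : IsCompact X := Metric.isCompact_of_isClosed_isBounded hXclosed hbd
  obtain ⟨xs, hxsX, hxsmin⟩ :=
    hXcompact.exists_isMinOn hne (dot_continuous c).continuousOn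
  have hmin : ∀ x, A.mulVec x ≤ a → 0 ≤ x → c ⬝ᵥ xs ≤ c ⬝ᵥ x :=
    fun x hx1 hx2 => hxsmin ⟨hx1, hx2⟩
  have weak : ∀ u : Fin q → ℝ, 0 ≤ u → -(Aᵀ.mulVec u) ≤ c → -(a ⬝ᵥ u) ≤ c ⬝ᵥ xs := by
    intro u hu hfeas
    have hd1 : (-(Aᵀ.mulVec u)) ⬝ᵥ xs ≤ c ⬝ᵥ xs := dot_mono_right hfeas hxsX.2
    have hd2 : Aᵀ.mulVec u ⬝ᵥ xs = u ⬝ᵥ A.mulVec xs := by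
      rw [Matrix.mulVec_transpose, ← Matrix.dotProduct_mulVec]
    have hd3 : u ⬝ᵥ A.mulVec xs ≤ u ⬝ᵥ a := dot_mono_left hxsX.1 hu
    have hd4 : u ⬝ᵥ a = a ⬝ᵥ u := dotProduct_comm u a
    have hd5 : (-(Aᵀ.mulVec u)) ⬝ᵥ xs = -(u ⬝ᵥ A.mulVec xs) := by
      rw [neg_dotProduct, hd2]
    linarith
  refine ⟨xs, hxsX, hmin, ?_, weak⟩
  by_contra hex
  push_neg at hex
  have hnex : ¬ ∃ u : Fin q → ℝ, 0 ≤ u ∧ -(Aᵀ.mulVec u) ≤ c ∧ c ⬝ᵥ xs ≤ -(a ⬝ᵥ u) := by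
    rintro ⟨u, hu0, huf, hle⟩
    exact absurd (le_antisymm (weak u hu0 huf) hle) (hex u hu0 huf)
  -- Farkas setup
  set M : Matrix (Fin n ⊕ Unit) (Fin q) ℝ :=
    Matrix.of (fun r j => Sum.elim (fun i => -A j i) (fun _ => a j) r) with hM
  set d : Fin n ⊕ Unit → ℝ := Sum.elim c (fun _ => -(c ⬝ᵥ xs)) with hd
  have hfark : ¬ ∃ u : Fin q → ℝ, (∀ j, 0 ≤ u j) ∧ M.mulVec u ≤ d := by
    rintro ⟨u, hu0, hMu⟩
    refine hnex ⟨u, fun j => hu0 j, fun i => ?_, ?_⟩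
    · have := hMu (Sum.inl i)
      have he : M.mulVec u (Sum.inl i) = -(Aᵀ.mulVec u) i := by
        simp [hM, Matrix.mulVec, dotProduct, Matrix.transpose_apply, neg_mul,
          Finset.sum_neg_distrib]
      rw [he] at this
      simpa [hd] using this
    · have := hMu (Sum.inr ())
      have he : M.mulVec u (Sum.inr ()) = a ⬝ᵥ u := by
        simp [hM, Matrix.mulVec, dotProduct]
      rw [he] at this
      simp only [hd, Sum.elim_inr] at this
      linarith
  obtain ⟨w, hw0, hMTw, hdw⟩ := farkas M d hfark
  set x : Fin n → ℝ := fun i => w (Sum.inl i) with hx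
  set μ : ℝ := w (Sum.inr ()) with hμdef
  have hxnn : 0 ≤ x := fun i => hw0 _
  have hμnn : 0 ≤ μ := hw0 _
  have hAx : ∀ j, A.mulVec x j ≤ μ * a j := by
    intro j
    have := hMTw j
    have he : Mᵀ.mulVec w j = -(A.mulVec x j) + a j * μ := by
      rw [Matrix.mulVec, dotProduct, Fintype.sum_sum_type]
      congr 1
      · rw [Matrix.mulVec, dotProduct, ← Finset.sum_neg_distrib]
        refine Finset.sum_congr rfl fun i _ => ?_
        show M (Sum.inl i) j * w (Sum.inl i) = -(A j i * x i)
        simp [hM, hx]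
      · simp [hM, Matrix.transpose_apply, hμdef]
    rw [he] at this
    linarith
  have hdw' : c ⬝ᵥ x - μ * (c ⬝ᵥ xs) < 0 := by
    have he : d ⬝ᵥ w = c ⬝ᵥ x - μ * (c ⬝ᵥ xs) := by
      rw [dotProduct, Fintype.sum_sum_type]
      simp [hd, hx, hμdef, dotProduct]
      ring
    rw [he] at hdw
    exact hdw
  rcases lt_or_eq_of_le hμnn with hμpos | hμzero
  · -- scale
    set x' : Fin n → ℝ := μ⁻¹ • x with hx'
    have hfeas1 : A.mulVec x' ≤ a := by
      intro j
      have : A.mulVec x' j = μ⁻¹ * A.mulVec x j := by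
        rw [hx', Matrix.mulVec_smul]; simp
      rw [this]
      calc μ⁻¹ * A.mulVec x j ≤ μ⁻¹ * (μ * a j) :=
            mul_le_mul_of_nonneg_left (hAx j) (inv_nonneg.mpr hμnn)
        _ = a j := by field_simp
    have hfeas2 : 0 ≤ x' := fun i => by
      have : x' i = μ⁻¹ * x i := rfl
      rw [this]; exact mul_nonneg (inv_nonneg.mpr hμnn) (hxnn i)
    have hval : c ⬝ᵥ x' = μ⁻¹ * (c ⬝ᵥ x) := by
      rw [hx', dotProduct_smul]; simp
    have hlt : c ⬝ᵥ x' < c ⬝ᵥ xs := by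
      rw [hval]
      have h5 : c ⬝ᵥ x < μ * (c ⬝ᵥ xs) := by linarith
      calc μ⁻¹ * (c ⬝ᵥ x) < μ⁻¹ * (μ * (c ⬝ᵥ xs)) :=
            mul_lt_mul_of_pos_left h5 (inv_pos.mpr hμpos)
        _ = c ⬝ᵥ xs := by field_simp
    exact absurd (hmin x' hfeas1 hfeas2) (not_le.mpr hlt)
  · -- unbounded direction
    have hμ0 : μ = 0 := hμzero.symm
    have hAx0 : ∀ j, A.mulVec x j ≤ 0 := fun j => by
      have := hAx j; rw [hμ0] at this; linarith
    have hcx : c ⬝ᵥ x < 0 := by rw [hμ0] at hdw'; linarith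
    obtain ⟨i₀, hi₀⟩ : ∃ i₀, 0 < x i₀ := by
      by_contra hno
      push_neg at hno
      have : x = 0 := funext fun i => le_antisymm (hno i) (hxnn i)
      rw [this] at hcx
      simp at hcx
    obtain ⟨R, hR⟩ := isBounded_iff_forall_norm_le.mp hbd
    have hRxs : ‖xs‖ ≤ R := hR xs hxsX
    have hR0 : 0 ≤ R := le_trans (norm_nonneg _) hRxs
    set t : ℝ := (R + 1 + |xs i₀|) / x i₀ with ht
    have ht0 : 0 ≤ t := div_nonneg (by positivity) hi₀.le
    set p : Fin n → ℝ := xs + t • x with hp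
    have hpX : p ∈ X := by
      refine ⟨fun j => ?_, fun i => ?_⟩
      · have : A.mulVec p j = A.mulVec xs j + t * A.mulVec x j := by
          rw [hp, Matrix.mulVec_add, Matrix.mulVec_smul]; simp
        rw [this]
        have := mul_nonpos_of_nonneg_of_nonpos ht0 (hAx0 j)
        have := hxsX.1 j
        linarith
      · have : p i = xs i + t * x i := rfl
        rw [this]
        have := mul_nonneg ht0 (hxnn i)
        have := hxsX.2 i
        linarith
    have hpi₀ : p i₀ = xs i₀ + (R + 1 + |xs i₀|) := by
      have : p i₀ = xs i₀ + t * x i₀ := rfl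
      rw [this, ht, div_mul_cancel₀ _ hi₀.ne']
    have h6 : p i₀ ≤ ‖p‖ := le_trans (le_abs_self _) (norm_le_pi_norm p i₀)
    have h7 : ‖p‖ ≤ R := hR p hpX
    have h8 : -|xs i₀| ≤ xs i₀ := neg_abs_le _
    rw [hpi₀] at h6
    linarith

end LP

open Matrix

/-- Equivalence between the disjoint bilinear programming problem and the
min-max linear problem with interdependent variables (Theorem 1 of the paper). -/
theorem stmt_0
    (n m q l : ℕ) (hn : 0 < n) (hm : 0 < m) (hq : 0 < q) (hl : 0 < l)
    (C : Matrix (Fin n) (Fin m) ℝ) (A : Matrix (Fin q) (Fin n) ℝ)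
    (B : Matrix (Fin l) (Fin m) ℝ)
    (a : Fin q → ℝ) (b : Fin l → ℝ) (g : Fin n → ℝ) (e : Fin m → ℝ)
    (z : (Fin n → ℝ) → (Fin m → ℝ) → ℝ)
    (hz : ∀ x y, z x y = x ⬝ᵥ C.mulVec y + g ⬝ᵥ x + e ⬝ᵥ y)
    (X : Set (Fin n → ℝ)) (Y : Set (Fin m → ℝ))
    (hX : X = {x | A.mulVec x ≤ a ∧ 0 ≤ x})
    (hY : Y = {y | B.mulVec y ≤ b ∧ 0 ≤ y})
    (hXne : X.Nonempty) (hYne : Y.Nonempty)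
    (hXbd : Bornology.IsBounded X) (hYbd : Bornology.IsBounded Y)
    (U : (Fin m → ℝ) → Set (Fin q → ℝ))
    (hU : ∀ y, U y = {u | 0 ≤ u ∧ -(Aᵀ.mulVec u) ≤ C.mulVec y + g}) :
    (∀ xs ∈ X, ∀ ys ∈ Y, IsLeast (Set.image2 z X Y) (z xs ys) →
      IsLeast {v : ℝ | ∃ y ∈ Y, IsGreatest ((fun u => e ⬝ᵥ y - a ⬝ᵥ u) '' U y) v} (z xs ys) ∧
      IsGreatest ((fun u => e ⬝ᵥ ys - a ⬝ᵥ u) '' U ys) (z xs ys)) ∧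
    (∀ zstar : ℝ, ∀ ys ∈ Y,
      IsLeast {v : ℝ | ∃ y ∈ Y, IsGreatest ((fun u => e ⬝ᵥ y - a ⬝ᵥ u) '' U y) v} zstar →
      IsGreatest ((fun u => e ⬝ᵥ ys - a ⬝ᵥ u) '' U ys) zstar →
      IsLeast (Set.image2 z X Y) zstar ∧ ∃ xs ∈ X, z xs ys = zstar) := by
  have hz' : ∀ x y, z x y = (C.mulVec y + g) ⬝ᵥ x + e ⬝ᵥ y := by
    intro x y
    rw [hz, add_dotProduct, dotProduct_comm (C.mulVec y) x]
  have duality : ∀ y : Fin m → ℝ, ∃ xy ∈ X,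
      IsGreatest ((fun u => e ⬝ᵥ y - a ⬝ᵥ u) '' U y) (z xy y) ∧
      ∀ x ∈ X, z xy y ≤ z x y := by
    intro y
    obtain ⟨xs, hfeas, hmin, ⟨u, hu0, hufeas, huval⟩, hweak⟩ :=
      lp_duality A a (C.mulVec y + g) (hX ▸ hXne) (hX ▸ hXbd)
    refine ⟨xs, hX ▸ hfeas, ⟨⟨u, ?_, ?_⟩, ?_⟩, ?_⟩
    · rw [hU]; exact ⟨hu0, hufeas⟩
    · show e ⬝ᵥ y - a ⬝ᵥ u = z xs y
      rw [hz']; linarith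
    · rintro v ⟨u', hu', rfl⟩
      rw [hU] at hu'
      have := hweak u' hu'.1 hu'.2
      show e ⬝ᵥ y - a ⬝ᵥ u' ≤ z xs y
      rw [hz']; linarith
    · intro x hx
      rw [hX] at hx
      have := hmin x hx.1 hx.2
      rw [hz' xs y, hz' x y]; linarith
  constructor
  · intro xs hxs ys hys hleast
    obtain ⟨xy, hxyX, hxygr, hxymin⟩ := duality ys
    have heq : z xy ys = z xs ys :=
      le_antisymm (hxymin xs hxs) (hleast.2 (Set.mem_image2_of_mem hxyX hys))
    have hgr : IsGreatest ((fun u => e ⬝ᵥ ys - a ⬝ᵥ u) '' U ys) (z xs ys) := heq ▸ hxygr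
    refine ⟨⟨⟨ys, hys, hgr⟩, ?_⟩, hgr⟩
    rintro v ⟨y, hy, hvgr⟩
    obtain ⟨xy', hxy'X, hxy'gr, _⟩ := duality y
    have hv : v = z xy' y := hvgr.unique hxy'gr
    rw [hv]
    exact hleast.2 (Set.mem_image2_of_mem hxy'X hy)
  · intro zstar ys hys hleast hgr
    obtain ⟨xy, hxyX, hxygr, hxymin⟩ := duality ys
    have hz1 : zstar = z xy ys := hgr.unique hxygr
    refine ⟨⟨hz1 ▸ Set.mem_image2_of_mem hxyX hys, ?_⟩, xy, hxyX, hz1.symm⟩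
    rintro v ⟨x, hx, y, hy, rfl⟩
    obtain ⟨xy', hxy'X, hxy'gr, hxy'min⟩ := duality y
    calc zstar ≤ z xy' y := hleast.2 ⟨y, hy, hxy'gr⟩
      _ ≤ z x y := hxy'min x hx
end

section
/- Assume X and Y are nonempty and bounded. For x ∈ ℝ^n let V(x) = {v ∈ ℝ^l : v ≥ 0, −Bᵀv ≤ Cᵀx + e}. If (x*, y*) ∈ X × Y minimizes z over X × Y with optimal value z*, then z* = min_{x ∈ X} max_{v ∈ V(x)} (g·x − b·v) and z* = max_{v ∈ V(x*)} (g·x* − b·v). -/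
open Matrix Finset

variable {E : Type*} [NormedAddCommGroup E] [NormedSpace ℝ E]

lemma cone_cara {ι : Type*} [Fintype ι] [DecidableEq ι] (v : ι → E) :
    ∀ (N : ℕ) (s : Finset ι) (_ : s.card ≤ N) (c : ι → ℝ), (∀ i, 0 ≤ c i) → (∀ i ∉ s, c i = 0) →
    ∃ (t : Finset ι) (c' : ι → ℝ), LinearIndependent ℝ (fun i : t => v i) ∧
      (∀ i, 0 ≤ c' i) ∧ (∀ i ∉ t, c' i = 0) ∧ ∑ i, c' i • v i = ∑ i, c i • v i := by
  intro N
  induction N with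
  | zero =>
    intro s hs c hc hsupp
    refine ⟨∅, c, linearIndependent_empty_type, hc, ?_, rfl⟩
    intro i _
    exact hsupp i (by simp [Finset.card_eq_zero.mp (Nat.le_zero.mp hs)])
  | succ N ih =>
    intro s hs c hc hsupp
    by_cases hli : LinearIndependent ℝ (fun i : s => v i)
    · exact ⟨s, c, hli, hc, hsupp, rfl⟩
    obtain ⟨g, hg0, i₁, hi₁⟩ := Fintype.not_linearIndependent_iff.mp hli
    -- extend g to ι
    set d₀ : ι → ℝ := fun i => if h : i ∈ s then g ⟨i, h⟩ else 0 with hd₀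
    have hd₀supp : ∀ i ∉ s, d₀ i = 0 := fun i hi => dif_neg hi
    have hd₀sum : ∑ i, d₀ i • v i = 0 := by
      rw [← Finset.sum_subset (Finset.subset_univ s) (fun i _ hi => by
        rw [hd₀supp i hi, zero_smul])]
      rw [← Finset.sum_attach s (fun i => d₀ i • v i)]
      rw [← hg0]
      refine Finset.sum_congr rfl fun i _ => ?_
      simp [hd₀, i.2]
    have hd₀ne : ∃ i, d₀ i ≠ 0 := ⟨i₁, by simpa [hd₀, i₁.2] using hi₁⟩
    -- make sure some coordinate is positive
    have key : ∃ d : ι → ℝ, (∀ i ∉ s, d i = 0) ∧ ∑ i, d i • v i = 0 ∧ ∃ i, 0 < d i := by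
      by_cases hpos : ∃ i, 0 < d₀ i
      · exact ⟨d₀, hd₀supp, hd₀sum, hpos⟩
      · push_neg at hpos
        obtain ⟨i, hi⟩ := hd₀ne
        exact ⟨-d₀, fun j hj => by simp [hd₀supp j hj], by
            simp only [Pi.neg_apply, neg_smul, Finset.sum_neg_distrib, hd₀sum, neg_zero], i,
          by simp only [Pi.neg_apply]; exact neg_pos.mpr (lt_of_le_of_ne (hpos i) hi)⟩
    obtain ⟨d, hdsupp, hdsum, ipos, hipos⟩ := key
    -- minimize ratio over positive coordinates
    have hT : (s.filter (fun i => 0 < d i)).Nonempty := by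
      refine ⟨ipos, Finset.mem_filter.mpr ⟨?_, hipos⟩⟩
      by_contra hni
      exact absurd (hdsupp ipos hni) (ne_of_gt hipos)
    obtain ⟨i₀, hi₀mem, hi₀min⟩ :=
      Finset.exists_min_image _ (fun i => c i / d i) hT
    obtain ⟨hi₀s, hi₀pos⟩ := Finset.mem_filter.mp hi₀mem
    set τ := c i₀ / d i₀ with hτ
    have hτ0 : 0 ≤ τ := div_nonneg (hc i₀) hi₀pos.le
    set c' : ι → ℝ := fun i => c i - τ * d i with hc'
    have hc'0 : ∀ i, 0 ≤ c' i := by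
      intro i
      simp only [hc', sub_nonneg]
      rcases le_or_gt (d i) 0 with hdi | hdi
      · exact le_trans (mul_nonpos_of_nonneg_of_nonpos hτ0 hdi) (hc i)
      · have : τ ≤ c i / d i := hi₀min i (Finset.mem_filter.mpr ⟨by
          by_contra hni; exact absurd (hdsupp i hni) (ne_of_gt hdi), hdi⟩)
        calc τ * d i ≤ (c i / d i) * d i := by nlinarith
        _ = c i := div_mul_cancel₀ _ (ne_of_gt hdi)
    have hc'supp : ∀ i ∉ s.erase i₀, c' i = 0 := by
      intro i hi
      rw [Finset.mem_erase] at hi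
      push_neg at hi
      by_cases hii : i = i₀
      · subst hii
        simp only [hc', hτ]
        field_simp
        ring
      · have his : i ∉ s := hi hii
        simp [hc', hsupp i his, hdsupp i his]
    have hc'sum : ∑ i, c' i • v i = ∑ i, c i • v i := by
      simp only [hc', sub_smul, Finset.sum_sub_distrib, ← smul_smul]
      rw [← Finset.smul_sum, hdsum, smul_zero, sub_zero]
    have hcard : (s.erase i₀).card ≤ N := by
      have := Finset.card_erase_of_mem hi₀s
      omega
    obtain ⟨t, c'', h1, h2, h3, h4⟩ := ih (s.erase i₀) hcard c' hc'0 hc'supp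
    exact ⟨t, c'', h1, h2, h3, h4.trans hc'sum⟩

lemma cone_isClosed {ι : Type*} [Fintype ι] [DecidableEq ι] [FiniteDimensional ℝ E]
    (v : ι → E) :
    IsClosed {x : E | ∃ c : ι → ℝ, (∀ i, 0 ≤ c i) ∧ ∑ i, c i • v i = x} := by
  have hset : {x : E | ∃ c : ι → ℝ, (∀ i, 0 ≤ c i) ∧ ∑ i, c i • v i = x} =
      ⋃ p : {t : Finset ι // LinearIndependent ℝ (fun i : t => v i)},
        (fun c : (p.1 : Finset ι) → ℝ => ∑ i, c i • v i.1) '' {c | ∀ i, 0 ≤ c i} := by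
    ext x
    constructor
    · rintro ⟨c, hc, rfl⟩
      obtain ⟨t, c', hli, hc'0, hc'supp, hsum⟩ :=
        cone_cara v (Finset.univ.card) Finset.univ (le_refl _) c hc (by simp)
      refine Set.mem_iUnion.mpr ⟨⟨t, hli⟩, fun i => c' i, fun i => hc'0 i, ?_⟩
      rw [← hsum]
      rw [← Finset.sum_subset (Finset.subset_univ t) (fun i _ hi => by
        rw [hc'supp i hi, zero_smul])]
      simpa using Finset.sum_attach t (fun i => c' i • v i)
    · intro hx
      obtain ⟨⟨t, hli⟩, c, _hc, rfl⟩ := Set.mem_iUnion.mp hx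
      refine ⟨fun i => if h : i ∈ t then c ⟨i, h⟩ else 0, fun i => ?_, ?_⟩
      · by_cases h : i ∈ t
        · simpa [h] using _hc ⟨i, h⟩
        · simp [h]
      · rw [← Finset.sum_subset (Finset.subset_univ t) (fun i _ hi => by simp [hi])]
        rw [← Finset.sum_attach t fun i => (if h : i ∈ t then c ⟨i, h⟩ else 0) • v i]
        refine Finset.sum_congr rfl fun i _ => by simp [i.2]
  rw [hset]
  refine isClosed_iUnion_of_finite fun p => ?_
  -- image of the nonneg orthant under an injective linear map
  let L : ((p.1 : Finset ι) → ℝ) →ₗ[ℝ] E :=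
    { toFun := fun c => ∑ i, c i • v i.1
      map_add' := fun x y => by simp [add_smul, Finset.sum_add_distrib]
      map_smul' := fun r x => by simp [smul_smul, Finset.smul_sum]
      }
  have hker : LinearMap.ker L = ⊥ := by
    rw [LinearMap.ker_eq_bot']
    intro c hc
    funext i
    exact Fintype.linearIndependent_iff.mp p.2 c hc i
  have hemb := LinearMap.isClosedEmbedding_of_injective hker
  have hclosed : IsClosed {c : (p.1 : Finset ι) → ℝ | ∀ i, 0 ≤ c i} := by
    have : {c : (p.1 : Finset ι) → ℝ | ∀ i, 0 ≤ c i} = ⋂ i, {c | 0 ≤ c i} := by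
      ext; simp [Set.mem_iInter]
    rw [this]
    exact isClosed_iInter fun i => isClosed_le continuous_const (continuous_apply i)
  exact hemb.isClosedMap _ hclosed


open scoped RealInnerProductSpace

lemma farkas_s1 {κ ρ : Type*} [Fintype κ] [Fintype ρ] [DecidableEq κ] [DecidableEq ρ]
    (M : Matrix κ ρ ℝ) (d : κ → ℝ)
    (h : ∀ u : κ → ℝ, 0 ≤ u → 0 ≤ Mᵀ *ᵥ u → 0 ≤ d ⬝ᵥ u) :
    ∃ v : ρ → ℝ, 0 ≤ v ∧ M *ᵥ v ≤ d := by
  classical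
  set N : Matrix κ (ρ ⊕ κ) ℝ :=
    Matrix.of fun i j => Sum.elim (fun p => M i p) (fun q => if q = i then (1:ℝ) else 0) j with hN
  let f₀ : EuclideanSpace ℝ (ρ ⊕ κ) →ₗ[ℝ] EuclideanSpace ℝ κ :=
    { toFun := fun x => WithLp.toLp 2 (N *ᵥ x.ofLp)
      map_add' := fun x y => by simp [Matrix.mulVec_add]
      map_smul' := fun c x => by simp [Matrix.mulVec_smul] }
  let f : EuclideanSpace ℝ (ρ ⊕ κ) →L[ℝ] EuclideanSpace ℝ κ :=
    LinearMap.toContinuousLinearMap f₀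
  let K : ProperCone ℝ (EuclideanSpace ℝ (ρ ⊕ κ)) :=
    { carrier := {x | ∀ i, 0 ≤ x i}
      add_mem' := fun hx hy i => add_nonneg (hx i) (hy i)
      zero_mem' := fun i => le_refl 0
      smul_mem' := fun c x hx i => by
        rw [← Nonneg.coe_smul]
        exact mul_nonneg c.2 (hx i)
      isClosed' := by
        show IsClosed {x : EuclideanSpace ℝ (ρ ⊕ κ) | ∀ i, 0 ≤ x i}
        have : {x : EuclideanSpace ℝ (ρ ⊕ κ) | ∀ i, 0 ≤ x i} = ⋂ i, {x | 0 ≤ x i} := by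
          ext; simp [Set.mem_iInter]
        rw [this]
        refine isClosed_iInter fun i => isClosed_le continuous_const ?_
        exact (continuous_apply i).comp (PiLp.continuous_ofLp 2 fun _ : ρ ⊕ κ => ℝ) }
  let dE : EuclideanSpace ℝ κ := WithLp.toLp 2 d
  have hmem : dE ∈ K.map f := by
    rw [ProperCone.relative_hyperplane_separation]
    intro y hy
    have hy' : ∀ x : EuclideanSpace ℝ (ρ ⊕ κ), (∀ i, 0 ≤ x i) → 0 ≤ ⟪f x, y⟫ := by
      intro x hx
      have hx' : x ∈ K := hx
      have := ProperCone.mem_innerDual.mp hy hx'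
      rwa [ContinuousLinearMap.adjoint_inner_right] at this
    have hfval : ∀ j : ρ ⊕ κ, ∀ i : κ, f (EuclideanSpace.single j 1) i = N i j := by
      intro j i
      show (N *ᵥ (EuclideanSpace.single j 1)) i = N i j
      simp only [Matrix.mulVec, dotProduct, EuclideanSpace.single_apply,
        mul_ite, mul_one, mul_zero]
      simp
    have hsingle_mem : ∀ j : ρ ⊕ κ, ∀ i, (0:ℝ) ≤ (EuclideanSpace.single j (1:ℝ)) i := by
      intro j i
      rw [EuclideanSpace.single_apply]
      positivity
    -- y is nonneg (from slack columns)
    have hy0 : (0:κ → ℝ) ≤ fun q => y q := by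
      intro q
      have h1 := hy' (EuclideanSpace.single (Sum.inr q) 1) (hsingle_mem _)
      rw [PiLp.inner_apply] at h1
      simp only [RCLike.inner_apply, conj_trivial, hfval, hN, Matrix.of_apply,
        Sum.elim_inr, ite_mul, one_mul, zero_mul] at h1
      simpa [Finset.sum_ite_eq] using h1
    -- Mᵀ y ≥ 0 (from M columns)
    have hMty : (0: ρ → ℝ) ≤ Mᵀ *ᵥ (fun q => y q) := by
      intro p
      have h1 := hy' (EuclideanSpace.single (Sum.inl p) 1) (hsingle_mem _)
      rw [PiLp.inner_apply] at h1
      simp only [RCLike.inner_apply, conj_trivial, hfval, hN, Matrix.of_apply,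
        Sum.elim_inl] at h1
      simpa [Matrix.mulVec, Matrix.transpose_apply, dotProduct, mul_comm] using h1
    have hd := h (fun q => y q) hy0 hMty
    rw [PiLp.inner_apply]
    simp only [RCLike.inner_apply, conj_trivial]
    simpa [dotProduct, mul_comm, dE] using hd
  -- now extract an exact solution using closedness of the finitely generated cone
  have hgen : (f '' (K : Set (EuclideanSpace ℝ (ρ ⊕ κ)))) =
      {x : EuclideanSpace ℝ κ | ∃ c : (ρ ⊕ κ) → ℝ, (∀ j, 0 ≤ c j) ∧
        ∑ j, c j • f (EuclideanSpace.single j 1) = x} := by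
    have hlin : ∀ w : (ρ ⊕ κ) → ℝ,
        ∑ j, w j • f (EuclideanSpace.single j (1:ℝ)) = f (∑ j, w j • EuclideanSpace.single j 1) := by
      intro w
      rw [map_sum]
      exact Finset.sum_congr rfl fun j _ => (_root_.map_smul f (w j) _).symm
    ext x
    constructor
    · rintro ⟨u, hu, rfl⟩
      refine ⟨fun j => u j, hu, ?_⟩
      have hrepr : ∑ j, u j • EuclideanSpace.single j (1:ℝ) = u := by
        have := (EuclideanSpace.basisFun (ρ ⊕ κ) ℝ).sum_repr u
        simpa [EuclideanSpace.basisFun_apply, EuclideanSpace.basisFun_repr] using this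
      rw [hlin, hrepr]
    · rintro ⟨c, hc, rfl⟩
      have hrepr : ∑ j, c j • EuclideanSpace.single j (1:ℝ) =
          (WithLp.toLp 2 c) := by
        have := (EuclideanSpace.basisFun (ρ ⊕ κ) ℝ).sum_repr (WithLp.toLp 2 c)
        simpa [EuclideanSpace.basisFun_apply, EuclideanSpace.basisFun_repr] using this
      exact ⟨(WithLp.toLp 2 c), hc, by rw [hlin, hrepr]⟩
  have hclosed := cone_isClosed (E := EuclideanSpace ℝ κ)
    (fun j : ρ ⊕ κ => f (EuclideanSpace.single j 1))
  have hmem' : dE ∈ f '' (K : Set (EuclideanSpace ℝ (ρ ⊕ κ))) := by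
    have h2 : dE ∈ closure (f '' (K : Set (EuclideanSpace ℝ (ρ ⊕ κ)))) := hmem
    rw [hgen] at h2
    rw [hgen]
    exact hclosed.closure_eq ▸ h2
  obtain ⟨u, hu, hfu⟩ := hmem'
  refine ⟨fun p => u (Sum.inl p), fun p => hu (Sum.inl p), ?_⟩
  intro i
  have hNu : (N *ᵥ (fun j => u j)) i = d i := congrFun (congrArg WithLp.ofLp hfu) i
  rw [Matrix.mulVec, dotProduct, Fintype.sum_sum_type] at hNu
  simp only [hN, Matrix.of_apply, Sum.elim_inl, Sum.elim_inr] at hNu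
  have hsum2 : ∑ q : κ, (if q = i then (1:ℝ) else 0) * u (Sum.inr q) = u (Sum.inr i) := by
    simp [ite_mul, Finset.sum_ite_eq]
  rw [hsum2] at hNu
  show ∑ p : ρ, M i p * u (Sum.inl p) ≤ d i
  have := hu (Sum.inr i)
  linarith
section P3
variable {μ lam : Type*} [Fintype μ] [Fintype lam] [DecidableEq μ] [DecidableEq lam]

lemma weak_dual (B : Matrix lam μ ℝ) (b : lam → ℝ) (c : μ → ℝ) {v : lam → ℝ} {y : μ → ℝ}
    (hv0 : 0 ≤ v) (hvf : -(Bᵀ *ᵥ v) ≤ c) (hyb : B *ᵥ y ≤ b) (hy0 : 0 ≤ y) :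
    -(b ⬝ᵥ v) ≤ c ⬝ᵥ y := by
  have h1 : (B *ᵥ y) ⬝ᵥ v ≤ b ⬝ᵥ v :=
    Finset.sum_le_sum fun i _ => mul_le_mul_of_nonneg_right (hyb i) (hv0 i)
  have h2 : (-(Bᵀ *ᵥ v)) ⬝ᵥ y ≤ c ⬝ᵥ y :=
    Finset.sum_le_sum fun j _ => mul_le_mul_of_nonneg_right (hvf j) (hy0 j)
  have h3 : (Bᵀ *ᵥ v) ⬝ᵥ y = (B *ᵥ y) ⬝ᵥ v := by
    rw [Matrix.mulVec_transpose, ← Matrix.dotProduct_mulVec, dotProduct_comm]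
  rw [neg_dotProduct] at h2
  linarith

lemma dual_attain (B : Matrix lam μ ℝ) (b : lam → ℝ) (c : μ → ℝ) (ys : μ → ℝ)
    (hysb : B *ᵥ ys ≤ b) (hys0 : 0 ≤ ys)
    (hmin : ∀ y, B *ᵥ y ≤ b → 0 ≤ y → c ⬝ᵥ ys ≤ c ⬝ᵥ y) :
    ∃ v, 0 ≤ v ∧ -(Bᵀ *ᵥ v) ≤ c ∧ -(b ⬝ᵥ v) = c ⬝ᵥ ys := by
  classical
  set M' : Matrix (μ ⊕ Unit) lam ℝ :=
    Matrix.of fun i j => Sum.elim (fun p => -(B j p)) (fun _ => b j) i with hM'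
  set d' : (μ ⊕ Unit) → ℝ := Sum.elim c (fun _ => -(c ⬝ᵥ ys)) with hd'
  have key : ∃ v : lam → ℝ, 0 ≤ v ∧ M' *ᵥ v ≤ d' := by
    apply farkas_s1
    intro u hu0 hMtu
    set y : μ → ℝ := fun p => u (Sum.inl p) with hy
    set t : ℝ := u (Sum.inr ()) with ht
    have hy0 : 0 ≤ y := fun p => hu0 (Sum.inl p)
    have ht0 : 0 ≤ t := hu0 (Sum.inr ())
    have hBy : ∀ j, (B *ᵥ y) j ≤ t * b j := by
      intro j
      have h0 := hMtu j
      rw [Matrix.mulVec, dotProduct, Fintype.sum_sum_type] at h0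
      simp only [Matrix.transpose_apply, hM', Matrix.of_apply, Sum.elim_inl, Sum.elim_inr,
        Finset.univ_unique, Finset.sum_singleton, neg_mul, Pi.zero_apply,
        show (default : Unit) = () from rfl, Finset.sum_neg_distrib] at h0
      simp only [Matrix.mulVec, dotProduct, hy]
      rw [ht, mul_comm]
      linarith
    have hdu : d' ⬝ᵥ u = c ⬝ᵥ y - t * (c ⬝ᵥ ys) := by
      rw [dotProduct, Fintype.sum_sum_type]
      simp only [hd', Sum.elim_inl, Sum.elim_inr, Finset.univ_unique, Finset.sum_singleton,
        show (default : Unit) = () from rfl]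
      simp only [dotProduct, hy, ht]
      ring
    rw [hdu]
    rcases eq_or_lt_of_le ht0 with htz | htpos
    · -- t = 0 : recession direction
      have hBy0 : B *ᵥ (ys + y) ≤ b := by
        intro j
        have := hBy j
        rw [← htz, zero_mul] at this
        have h2 := hysb j
        rw [Matrix.mulVec_add]
        simpa using add_le_add h2 this
      have := hmin (ys + y) hBy0 (by intro p; exact add_nonneg (hys0 p) (hy0 p))
      rw [dotProduct_add] at this
      rw [← htz]
      linarith
    · -- t > 0 : rescale
      have hfeas : B *ᵥ (t⁻¹ • y) ≤ b := by
        intro j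
        rw [Matrix.mulVec_smul]
        have := hBy j
        have h2 : t⁻¹ * ((B *ᵥ y) j) ≤ t⁻¹ * (t * b j) :=
          mul_le_mul_of_nonneg_left this (inv_nonneg.mpr ht0)
        rw [← mul_assoc, inv_mul_cancel₀ (ne_of_gt htpos), one_mul] at h2
        simpa using h2
      have := hmin (t⁻¹ • y) hfeas (fun p => by
        have := hy0 p
        have : (0:ℝ) ≤ t⁻¹ * y p := mul_nonneg (inv_nonneg.mpr ht0) this
        simpa using this)
      rw [dotProduct_smul] at this
      have h4 : t * (c ⬝ᵥ ys) ≤ t * (t⁻¹ • (c ⬝ᵥ y)) := mul_le_mul_of_nonneg_left this ht0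
      rw [smul_eq_mul, ← mul_assoc, mul_inv_cancel₀ (ne_of_gt htpos), one_mul] at h4
      linarith
  obtain ⟨v, hv0, hvle⟩ := key
  have hfeas : -(Bᵀ *ᵥ v) ≤ c := by
    intro p
    have h0 := hvle (Sum.inl p)
    simp only [hM', hd', Matrix.mulVec, dotProduct, Matrix.of_apply, Sum.elim_inl,
      neg_mul] at h0
    simp only [Pi.neg_apply, Matrix.mulVec, dotProduct, Matrix.transpose_apply]
    rw [← Finset.sum_neg_distrib]
    exact h0
  refine ⟨v, hv0, hfeas, ?_⟩
  have h1 := hvle (Sum.inr ())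
  have h1' : b ⬝ᵥ v ≤ -(c ⬝ᵥ ys) := by
    simpa [hM', hd', Matrix.mulVec, dotProduct] using h1
  have h2 := weak_dual B b c hv0 hfeas hysb hys0
  linarith

end P3

/-- The dual min-max linear problem characterization (Theorem 2 of the paper). -/
theorem stmt_1
    (n m q l : ℕ) (hn : 0 < n) (hm : 0 < m) (hq : 0 < q) (hl : 0 < l)
    (C : Matrix (Fin n) (Fin m) ℝ) (A : Matrix (Fin q) (Fin n) ℝ)
    (B : Matrix (Fin l) (Fin m) ℝ)
    (a : Fin q → ℝ) (b : Fin l → ℝ) (g : Fin n → ℝ) (e : Fin m → ℝ)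
    (z : (Fin n → ℝ) → (Fin m → ℝ) → ℝ)
    (hz : ∀ x y, z x y = x ⬝ᵥ C.mulVec y + g ⬝ᵥ x + e ⬝ᵥ y)
    (X : Set (Fin n → ℝ)) (Y : Set (Fin m → ℝ))
    (hX : X = {x | A.mulVec x ≤ a ∧ 0 ≤ x})
    (hY : Y = {y | B.mulVec y ≤ b ∧ 0 ≤ y})
    (hXne : X.Nonempty) (hYne : Y.Nonempty)
    (hXbd : Bornology.IsBounded X) (hYbd : Bornology.IsBounded Y)
    (V : (Fin n → ℝ) → Set (Fin l → ℝ))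
    (hV : ∀ x, V x = {v | 0 ≤ v ∧ -(Bᵀ.mulVec v) ≤ Cᵀ.mulVec x + e}) :
    ∀ xs ∈ X, ∀ ys ∈ Y, IsLeast (Set.image2 z X Y) (z xs ys) →
      IsLeast {w : ℝ | ∃ x ∈ X, IsGreatest ((fun v => g ⬝ᵥ x - b ⬝ᵥ v) '' V x) w} (z xs ys) ∧
      IsGreatest ((fun v => g ⬝ᵥ xs - b ⬝ᵥ v) '' V xs) (z xs ys) := by
  intro xs hxs ys hys hleast
  have hzd : ∀ x y, z x y = g ⬝ᵥ x + (Cᵀ *ᵥ x + e) ⬝ᵥ y := by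
    intro x y
    rw [hz, add_dotProduct, Matrix.dotProduct_mulVec, ← Matrix.mulVec_transpose]
    ring
  have hYclosed : IsClosed Y := by
    rw [hY]
    have : {y : Fin m → ℝ | B *ᵥ y ≤ b ∧ 0 ≤ y} =
        (⋂ i, {y | (B *ᵥ y) i ≤ b i}) ∩ ⋂ j, {y | 0 ≤ y j} := by
      ext y
      simp [Pi.le_def, Set.mem_iInter, forall_and]
    rw [this]
    refine IsClosed.inter (isClosed_iInter fun i => isClosed_le ?_ continuous_const)
      (isClosed_iInter fun j => isClosed_le continuous_const (continuous_apply j))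
    show Continuous fun y : Fin m → ℝ => ∑ j, B i j * y j
    exact continuous_finset_sum _ fun j _ => continuous_const.mul (continuous_apply j)
  have hYcpt : IsCompact Y := Metric.isCompact_of_isClosed_isBounded hYclosed hYbd
  have hmin_exists : ∀ c : Fin m → ℝ, ∃ y ∈ Y, ∀ y' ∈ Y, c ⬝ᵥ y ≤ c ⬝ᵥ y' := by
    intro c
    have hcont : Continuous fun y : Fin m → ℝ => c ⬝ᵥ y := by
      show Continuous fun y : Fin m → ℝ => ∑ i, c i * y i
      exact continuous_finset_sum _ fun i _ => continuous_const.mul (continuous_apply i)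
    obtain ⟨y0, hy0, hmin⟩ := hYcpt.exists_isMinOn hYne hcont.continuousOn
    exact ⟨y0, hy0, fun y' hy' => hmin hy'⟩
  have hkey : ∀ (x : Fin n → ℝ) (yx : Fin m → ℝ), yx ∈ Y →
      (∀ y' ∈ Y, (Cᵀ *ᵥ x + e) ⬝ᵥ yx ≤ (Cᵀ *ᵥ x + e) ⬝ᵥ y') →
      IsGreatest ((fun v => g ⬝ᵥ x - b ⬝ᵥ v) '' V x) (z x yx) := by
    intro x yx hyxY hyxmin
    have hyxY' : B *ᵥ yx ≤ b ∧ 0 ≤ yx := by rw [hY] at hyxY; exact hyxY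
    obtain ⟨v, hv0, hvf, hveq⟩ := dual_attain B b (Cᵀ *ᵥ x + e) yx hyxY'.1 hyxY'.2
      (fun y hby h0y => hyxmin y (by rw [hY]; exact ⟨hby, h0y⟩))
    constructor
    · refine ⟨v, ?_, ?_⟩
      · rw [hV]; exact ⟨hv0, hvf⟩
      · show g ⬝ᵥ x - b ⬝ᵥ v = z x yx
        rw [hzd]
        linarith
    · rintro w ⟨v', hv', rfl⟩
      rw [hV] at hv'
      have hwd := weak_dual B b (Cᵀ *ᵥ x + e) hv'.1 hv'.2 hyxY'.1 hyxY'.2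
      show g ⬝ᵥ x - b ⬝ᵥ v' ≤ z x yx
      rw [hzd]
      linarith
  have hysmin : ∀ y' ∈ Y, (Cᵀ *ᵥ xs + e) ⬝ᵥ ys ≤ (Cᵀ *ᵥ xs + e) ⬝ᵥ y' := by
    intro y' hy'
    have h1 := hleast.2 (Set.mem_image2_of_mem hxs hy')
    rw [hzd, hzd] at h1
    linarith
  have hstmt2 := hkey xs ys hys hysmin
  refine ⟨⟨⟨xs, hxs, hstmt2⟩, ?_⟩, hstmt2⟩
  rintro w ⟨x, hx, hgr⟩
  obtain ⟨yx, hyxY, hyxmin⟩ := hmin_exists (Cᵀ *ᵥ x + e)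
  have h2 := hkey x yx hyxY hyxmin
  rw [hgr.unique h2]
  exact hleast.2 (Set.mem_image2_of_mem hx hyxY)
end

section
/- Assume X and Y are nonempty and bounded. For x ∈ ℝ^n let V(x) = {v ∈ ℝ^p : v ≥ 0, −Dᵀv = Cᵀx + e}. If (x*, y*) ∈ X × Y minimizes z over X × Y with optimal value z*, then z* = min_{x ∈ X} max_{v ∈ V(x)} (g·x − d·v) and z* = max_{v ∈ V(x*)} (g·x* − d·v). -/
open Matrix Finset

lemma cara_aux {k r : ℕ} (w : Fin k → (Fin r → ℝ)) :
    ∀ (N : ℕ) (lam : Fin k → ℝ), 0 ≤ lam →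
      (Finset.univ.filter (fun i => lam i ≠ 0)).card ≤ N →
    ∃ lam' : Fin k → ℝ, 0 ≤ lam' ∧ (∑ i, lam' i • w i) = (∑ i, lam i • w i) ∧
      LinearIndependent ℝ (fun i : {i // lam' i ≠ 0} => w i) := by
  classical
  intro N
  induction N with
  | zero =>
    intro lam hlam hcard
    have hz : ∀ i, lam i = 0 := by
      intro i
      by_contra hi
      have : i ∈ Finset.univ.filter (fun i => lam i ≠ 0) := by simp [hi]
      have := Finset.card_pos.2 ⟨i, this⟩
      omega
    refine ⟨lam, hlam, rfl, ?_⟩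
    have : IsEmpty {i // lam i ≠ 0} := ⟨fun ⟨i, hi⟩ => hi (hz i)⟩
    exact linearIndependent_empty_type
  | succ N ih =>
    intro lam hlam hcard
    by_cases hLI : LinearIndependent ℝ (fun i : {i // lam i ≠ 0} => w i)
    · exact ⟨lam, hlam, rfl, hLI⟩
    · obtain ⟨gg, hgsum, j0, hj0⟩ := Fintype.not_linearIndependent_iff.1 hLI
      -- extend gg to mu on Fin k; arrange a positive entry
      have key : ∀ gg : {i // lam i ≠ 0} → ℝ,
          (∑ i : {i // lam i ≠ 0}, gg i • w i) = 0 →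
          ∃ mu : Fin k → ℝ, (∑ i, mu i • w i) = 0 ∧
            (∀ i, mu i ≠ 0 → lam i ≠ 0) ∧
            (∀ j : {i // lam i ≠ 0}, mu j = gg j) := by
        intro gg hgsum
        refine ⟨fun i => if h : lam i ≠ 0 then gg ⟨i, h⟩ else 0, ?_, ?_, ?_⟩
        · rw [show (∑ i, (if h : lam i ≠ 0 then gg ⟨i, h⟩ else 0) • w i)
              = ∑ i ∈ Finset.univ.filter (fun i => lam i ≠ 0),
                  (if h : lam i ≠ 0 then gg ⟨i, h⟩ else 0) • w i from
            (Finset.sum_subset (Finset.subset_univ _) (by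
              intro i _ hi
              simp only [Finset.mem_filter, Finset.mem_univ, true_and, not_not] at hi
              simp [hi])).symm]
          rw [Finset.sum_subtype (p := fun i => lam i ≠ 0) (Finset.univ.filter (fun i => lam i ≠ 0))
            (by simp) (fun i => (if h : lam i ≠ 0 then gg ⟨i, h⟩ else 0) • w i)]
          rw [← hgsum]
          refine Finset.sum_congr rfl ?_
          rintro ⟨i, hi⟩ _
          simp [hi]
        · intro i hi
          by_contra h
          simp [h] at hi
        · rintro ⟨i, hi⟩
          simp [hi]
      -- get mu with a strictly positive entry
      have key2 : ∃ mu : Fin k → ℝ, (∑ i, mu i • w i) = 0 ∧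
          (∀ i, mu i ≠ 0 → lam i ≠ 0) ∧ ∃ i, 0 < mu i := by
        rcases lt_or_gt_of_ne hj0 with hneg | hpos
        · obtain ⟨mu, h1, h2, h3⟩ := key (-gg) (by simpa using hgsum)
          exact ⟨mu, h1, h2, ⟨j0, by rw [h3 j0]; simpa using hneg⟩⟩
        · obtain ⟨mu, h1, h2, h3⟩ := key gg hgsum
          exact ⟨mu, h1, h2, ⟨j0, by rw [h3 j0]; exact hpos⟩⟩
      obtain ⟨mu, hmusum, hmusupp, i1, hi1⟩ := key2
      -- minimize ratio over positive entries of mu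
      obtain ⟨i0, hi0mem, hi0min⟩ := Finset.exists_min_image
        (Finset.univ.filter (fun i => 0 < mu i)) (fun i => lam i / mu i)
        ⟨i1, by simp [hi1]⟩
      simp only [Finset.mem_filter, Finset.mem_univ, true_and] at hi0mem
      set t : ℝ := lam i0 / mu i0 with ht
      have ht0 : 0 ≤ t := div_nonneg (hlam i0) hi0mem.le
      set lam2 : Fin k → ℝ := fun i => lam i - t * mu i with hlam2
      have hlam2nn : 0 ≤ lam2 := by
        intro i
        simp only [hlam2, Pi.zero_apply, sub_nonneg]
        rcases le_or_gt (mu i) 0 with h | h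
        · exact le_trans (mul_nonpos_of_nonneg_of_nonpos ht0 h) (hlam i)
        · have := hi0min i (by simp [h])
          rw [div_le_div_iff₀ hi0mem h] at this
          calc t * mu i = lam i0 * mu i / mu i0 := by rw [ht]; ring
          _ ≤ lam i * mu i0 / mu i0 := (div_le_div_iff_of_pos_right hi0mem).2 this
          _ = lam i := by field_simp
      have hsum2 : (∑ i, lam2 i • w i) = ∑ i, lam i • w i := by
        simp only [hlam2, sub_smul, Finset.sum_sub_distrib]
        rw [show (∑ i, (t * mu i) • w i) = t • ∑ i, mu i • w i by
          rw [Finset.smul_sum]; exact Finset.sum_congr rfl fun i _ => (smul_smul t (mu i) (w i)).symm]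
        rw [hmusum, smul_zero, sub_zero]
      -- support shrinks
      have hsub : Finset.univ.filter (fun i => lam2 i ≠ 0) ⊆
          (Finset.univ.filter (fun i => lam i ≠ 0)).erase i0 := by
        intro i hi
        simp only [Finset.mem_filter, Finset.mem_univ, true_and] at hi
        rw [Finset.mem_erase]
        constructor
        · rintro rfl
          apply hi
          simp only [hlam2, ht]
          field_simp
          ring
        · simp only [Finset.mem_filter, Finset.mem_univ, true_and]
          intro h0
          apply hi
          simp [hlam2, h0, (by by_contra hmi; exact (hmusupp i hmi) h0 : mu i = 0)]
      have hi0supp : i0 ∈ Finset.univ.filter (fun i => lam i ≠ 0) := by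
        simp only [Finset.mem_filter, Finset.mem_univ, true_and]
        exact hmusupp i0 (ne_of_gt hi0mem)
      have hcard2 : (Finset.univ.filter (fun i => lam2 i ≠ 0)).card ≤ N := by
        have := Finset.card_le_card hsub
        rw [Finset.card_erase_of_mem hi0supp] at this
        omega
      obtain ⟨lam', h1, h2, h3⟩ := ih lam2 hlam2nn hcard2
      exact ⟨lam', h1, h2.trans hsum2, h3⟩

lemma isClosed_cone_s2 {k r : ℕ} (w : Fin k → (Fin r → ℝ)) :
    IsClosed {x : Fin r → ℝ | ∃ lam : Fin k → ℝ, 0 ≤ lam ∧ x = ∑ i, lam i • w i} := by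
  classical
  have main : {x : Fin r → ℝ | ∃ lam : Fin k → ℝ, 0 ≤ lam ∧ x = ∑ i, lam i • w i}
      = ⋃ s : Finset (Fin k),
        {x | LinearIndependent ℝ (fun i : s => w i) ∧
          ∃ lam : Fin k → ℝ, 0 ≤ lam ∧ (∀ i ∉ s, lam i = 0) ∧ x = ∑ i, lam i • w i} := by
    ext x
    simp only [Set.mem_setOf_eq, Set.mem_iUnion]
    constructor
    · rintro ⟨lam, hlam, rfl⟩
      obtain ⟨lam', h1, h2, h3⟩ := cara_aux w (Finset.univ.filter (fun i => lam i ≠ 0)).card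
        lam hlam le_rfl
      refine ⟨Finset.univ.filter (fun i => lam' i ≠ 0), ?_, lam', h1, ?_, h2.symm⟩
      · have h4 := h3.comp
          (fun i : {i : Fin k // i ∈ Finset.univ.filter (fun i => lam' i ≠ 0)} =>
            (⟨i.1, (Finset.mem_filter.1 i.2).2⟩ : {i // lam' i ≠ 0}))
          (fun a b hab => Subtype.ext (by simpa using congrArg Subtype.val hab))
        exact h4
      · intro i hi
        simp only [Finset.mem_filter, Finset.mem_univ, true_and, not_not] at hi
        exact hi
    · rintro ⟨s, _, lam, hlam, _, rfl⟩
      exact ⟨lam, hlam, rfl⟩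
  rw [main]
  apply isClosed_iUnion_of_finite
  intro s
  by_cases hLI : LinearIndependent ℝ (fun i : s => w i)
  · -- the set equals the image of the nonneg orthant under an injective linear map
    set f : (s → ℝ) →ₗ[ℝ] (Fin r → ℝ) :=
      { toFun := fun lam => ∑ i : s, lam i • w i
        map_add' := by intro u v; simp [add_smul, Finset.sum_add_distrib]
        map_smul' := by
          intro c u
          simp [smul_smul, Finset.smul_sum] } with hf
    have hinj : Function.Injective f := by
      intro u v huv
      have h0 : (∑ i : s, (u - v) i • w i) = 0 := by
        simp only [Pi.sub_apply, sub_smul, Finset.sum_sub_distrib]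
        rw [show (∑ i : s, u i • w i) = f u from rfl, show (∑ i : s, v i • w i) = f v from rfl,
          huv, sub_self]
      have := Fintype.linearIndependent_iff.1 hLI (u - v) h0
      funext i
      have := this i
      simpa [sub_eq_zero] using this
    have hset : {x | LinearIndependent ℝ (fun i : s => w i) ∧
        ∃ lam : Fin k → ℝ, 0 ≤ lam ∧ (∀ i ∉ s, lam i = 0) ∧ x = ∑ i, lam i • w i}
        = f '' {lam : s → ℝ | 0 ≤ lam} := by
      ext x
      simp only [Set.mem_setOf_eq, Set.mem_image]
      constructor
      · rintro ⟨-, lam, hlam, hsupp, rfl⟩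
        refine ⟨fun i => lam i, fun i => hlam i, ?_⟩
        rw [hf]
        show (∑ i : s, lam i • w i) = ∑ i, lam i • w i
        rw [← Finset.sum_subtype (p := fun i => i ∈ s) s (fun _ => Iff.rfl)
          (fun i => lam i • w i)]
        exact (Finset.sum_subset (Finset.subset_univ s) (by
          intro i _ hi; rw [hsupp i hi, zero_smul])).symm |>.symm
      · rintro ⟨u, hu, rfl⟩
        refine ⟨hLI, fun i => if h : i ∈ s then u ⟨i, h⟩ else 0, ?_, ?_, ?_⟩
        · intro i
          by_cases h : i ∈ s
          · simpa [h] using hu ⟨i, h⟩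
          · simp [h]
        · intro i hi; simp [hi]
        · rw [hf]
          simp only [LinearMap.coe_mk, AddHom.coe_mk]
          rw [show (∑ i, (if h : i ∈ s then u ⟨i, h⟩ else 0) • w i)
              = ∑ i ∈ s, (if h : i ∈ s then u ⟨i, h⟩ else 0) • w i from
            (Finset.sum_subset (Finset.subset_univ s) (by
              intro i _ hi; simp [hi])).symm]
          rw [Finset.sum_subtype (p := fun i => i ∈ s) s (fun _ => Iff.rfl)]
          exact Finset.sum_congr rfl (by rintro ⟨i, hi⟩ _; simp [hi])
    rw [hset]
    have hce := LinearMap.isClosedEmbedding_of_injective (f := f) (LinearMap.ker_eq_bot.2 hinj)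
    apply hce.isClosedMap
    have : {lam : s → ℝ | 0 ≤ lam} = ⋂ i : s, (fun lam : s → ℝ => lam i) ⁻¹' (Set.Ici 0) := by
      ext u; simp [Pi.le_def, Set.mem_iInter]
    rw [this]
    exact isClosed_iInter fun i => (isClosed_Ici).preimage (continuous_apply i)
  · convert isClosed_empty
    ext x
    simp [hLI]

lemma inner_eq_dot {r : ℕ} (x y : EuclideanSpace ℝ (Fin r)) :
    (inner ℝ x y : ℝ) = x ⬝ᵥ y := by simp [PiLp.inner_apply, dotProduct, mul_comm]

lemma farkas_s2 {k r : ℕ} (w : Fin k → (Fin r → ℝ)) (b : Fin r → ℝ)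
    (h : ∀ y : Fin r → ℝ, (∀ i, 0 ≤ w i ⬝ᵥ y) → 0 ≤ b ⬝ᵥ y) :
    ∃ lam : Fin k → ℝ, 0 ≤ lam ∧ b = ∑ i, lam i • w i := by
  by_contra hcon
  push_neg at hcon
  set S : Set (EuclideanSpace ℝ (Fin r)) :=
    {x : EuclideanSpace ℝ (Fin r) | ∃ lam : Fin k → ℝ, 0 ≤ lam ∧
      (x : Fin r → ℝ) = ∑ i, lam i • w i} with hS
  have hSclosed : IsClosed S := by
    have : S = (PiLp.continuousLinearEquiv 2 ℝ (fun _ : Fin r => ℝ)) ⁻¹'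
        {x : Fin r → ℝ | ∃ lam : Fin k → ℝ, 0 ≤ lam ∧ x = ∑ i, lam i • w i} := rfl
    rw [this]
    exact (isClosed_cone_s2 w).preimage (PiLp.continuousLinearEquiv 2 ℝ _).continuous
  let K : ConvexCone ℝ (EuclideanSpace ℝ (Fin r)) :=
    { carrier := S
      smul_mem' := by
        rintro c hc x ⟨lam, hlam, hx⟩
        refine ⟨c • lam, fun i => mul_nonneg hc.le (hlam i), ?_⟩
        show c • (x : Fin r → ℝ) = _
        rw [hx, Finset.smul_sum]
        exact Finset.sum_congr rfl fun i _ => by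
          simp [smul_smul]
      add_mem' := by
        rintro x ⟨lam1, h1, hx⟩ y ⟨lam2, h2, hy⟩
        refine ⟨lam1 + lam2, fun i => add_nonneg (h1 i) (h2 i), ?_⟩
        show (x : Fin r → ℝ) + y = _
        rw [hx, hy, ← Finset.sum_add_distrib]
        exact Finset.sum_congr rfl fun i _ => by simp [add_smul] }
  have hne : (K : Set (EuclideanSpace ℝ (Fin r))).Nonempty :=
    ⟨0, ⟨0, le_rfl, by simp⟩⟩
  have hbK : (WithLp.toLp 2 b : EuclideanSpace ℝ (Fin r)) ∉ K := by
    rintro ⟨lam, hlam, hb⟩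
    exact hcon lam hlam hb
  let P : ProperCone ℝ (EuclideanSpace ℝ (Fin r)) :=
    { carrier := S
      add_mem' := fun ha hb => K.add_mem' ha hb
      zero_mem' := ⟨0, le_rfl, by simp⟩
      smul_mem' := fun c x hx => by
        rcases hx with ⟨lam, hlam, hx⟩
        refine ⟨(c : ℝ) • lam, fun i => mul_nonneg c.2 (hlam i), ?_⟩
        show (c : ℝ) • (x : Fin r → ℝ) = _
        rw [hx, Finset.smul_sum]
        exact Finset.sum_congr rfl fun i _ => by simp [smul_smul]
      isClosed' := hSclosed }
  obtain ⟨y, hy1, hy2⟩ :=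
    ProperCone.hyperplane_separation' (C := P) hbK
  have hwiy : ∀ i, 0 ≤ w i ⬝ᵥ y := by
    intro i
    have hwi : (WithLp.toLp 2 (w i) : EuclideanSpace ℝ (Fin r)) ∈ K := by
      refine ⟨fun j => if i = j then 1 else 0, by intro j; positivity, ?_⟩
      simp [ite_smul]
    have := hy1 _ hwi
    rwa [inner_eq_dot] at this
  have hb := h y hwiy
  have hb2 : (0:ℝ) ≤ inner ℝ (WithLp.toLp 2 b : EuclideanSpace ℝ (Fin r)) y := by
    rw [inner_eq_dot]; exact hb
  linarith

lemma lp_dual {m p : ℕ} (D : Matrix (Fin p) (Fin m) ℝ) (d : Fin p → ℝ) (c : Fin m → ℝ)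
    (hne : ({y : Fin m → ℝ | D.mulVec y ≤ d}).Nonempty)
    (hbd : Bornology.IsBounded {y : Fin m → ℝ | D.mulVec y ≤ d}) :
    ∃ y0, D.mulVec y0 ≤ d ∧ (∀ y, D.mulVec y ≤ d → c ⬝ᵥ y0 ≤ c ⬝ᵥ y) ∧
      IsGreatest ((fun v => -(d ⬝ᵥ v)) '' {v | 0 ≤ v ∧ -(Dᵀ.mulVec v) = c}) (c ⬝ᵥ y0) := by
  classical
  -- Y is closed
  have hYclosed : IsClosed {y : Fin m → ℝ | D.mulVec y ≤ d} := by
    have : {y : Fin m → ℝ | D.mulVec y ≤ d} = ⋂ j, {y | D.mulVec y j ≤ d j} := by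
      ext y; simp [Pi.le_def, Set.mem_iInter]
    rw [this]
    refine isClosed_iInter fun j => ?_
    have hcont : Continuous fun y : Fin m → ℝ => D.mulVec y j := by
      simp only [Matrix.mulVec, dotProduct]
      exact continuous_finset_sum _ fun i _ => continuous_const.mul (continuous_apply i)
    exact isClosed_le hcont continuous_const
  have hccont : Continuous fun y : Fin m → ℝ => c ⬝ᵥ y := by
    simp only [dotProduct]
    exact continuous_finset_sum _ fun i _ => continuous_const.mul (continuous_apply i)
  have hcompact : IsCompact {y : Fin m → ℝ | D.mulVec y ≤ d} :=
    Metric.isCompact_of_isClosed_isBounded hYclosed hbd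
  obtain ⟨y0, hy0Y, hy0min⟩ := hcompact.exists_isMinOn hne hccont.continuousOn
  refine ⟨y0, hy0Y, fun y hy => hy0min hy, ?_, ?_⟩
  · -- membership: construct the optimal dual variable via Farkas
    set w : Fin (p+1) → (Fin (m+1) → ℝ) := fun j =>
      Fin.lastCases (Fin.snoc 0 1) (fun j' => Fin.snoc (fun i => D j' i) (d j')) j with hw
    set b : Fin (m+1) → ℝ := Fin.snoc (fun i => -c i) (-(c ⬝ᵥ y0)) with hb
    have hsnoc_dot : ∀ (u : Fin m → ℝ) (α : ℝ) (Y' : Fin (m+1) → ℝ),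
        (Fin.snoc u α : Fin (m+1) → ℝ) ⬝ᵥ Y'
          = (∑ i : Fin m, u i * Y' i.castSucc) + α * Y' (Fin.last m) := by
      intro u α Y'
      rw [dotProduct, Fin.sum_univ_castSucc]
      simp
    have hfar : ∀ Y' : Fin (m+1) → ℝ, (∀ j, 0 ≤ w j ⬝ᵥ Y') → 0 ≤ b ⬝ᵥ Y' := by
      intro Y' hY'
      set y : Fin m → ℝ := fun i => Y' i.castSucc with hy
      set t : ℝ := Y' (Fin.last m) with htdef
      have htnn : 0 ≤ t := by
        have := hY' (Fin.last p)
        rw [hw] at this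
        simp only [Fin.lastCases_last] at this
        rw [hsnoc_dot] at this
        simpa using this
      have hrow : ∀ j : Fin p, 0 ≤ (D j ⬝ᵥ y) + d j * t := by
        intro j
        have := hY' j.castSucc
        rw [hw] at this
        simp only [Fin.lastCases_castSucc] at this
        rw [hsnoc_dot] at this
        simpa [dotProduct] using this
      have hgoal : b ⬝ᵥ Y' = -(c ⬝ᵥ y) + (-(c ⬝ᵥ y0)) * t := by
        rw [hb, hsnoc_dot]
        simp [dotProduct, Finset.sum_neg_distrib, neg_mul]
        rfl
      rw [hgoal]
      rcases eq_or_lt_of_le htnn with ht0 | htpos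
      · -- t = 0 : show y = 0 using boundedness
        have hray : ∀ j : Fin p, 0 ≤ D j ⬝ᵥ y := by
          intro j; have := hrow j; rw [← ht0] at this; simpa using this
        have hy0' : y = 0 := by
          by_contra hyne
          obtain ⟨R, hR⟩ := isBounded_iff_forall_norm_le.1 hbd
          obtain ⟨y1, hy1⟩ := hne
          have hynorm : 0 < ‖y‖ := norm_pos_iff.2 hyne
          set s : ℝ := (R + ‖y1‖ + 1) / ‖y‖ with hs
          have hRnn : 0 ≤ R := le_trans (norm_nonneg y1) (hR y1 hy1)
          have hsnn : 0 ≤ s := div_nonneg (by linarith [norm_nonneg y1]) hynorm.le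
          have hmem : y1 - s • y ∈ {y : Fin m → ℝ | D.mulVec y ≤ d} := by
            intro j
            have : D.mulVec (y1 - s • y) j = D.mulVec y1 j - s * (D j ⬝ᵥ y) := by
              rw [Matrix.mulVec_sub, Matrix.mulVec_smul]
              simp [Matrix.mulVec, dotProduct]
            rw [this]
            have h1 : D.mulVec y1 j ≤ d j := hy1 j
            have h2 : 0 ≤ s * (D j ⬝ᵥ y) := mul_nonneg hsnn (hray j)
            linarith
          have hnorm1 := hR _ hmem
          have hnorm2 : ‖s • y‖ - ‖y1‖ ≤ ‖y1 - s • y‖ := by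
            have := norm_sub_norm_le (s • y) y1
            rw [show s • y - y1 = -(y1 - s • y) by ring, norm_neg] at this
            linarith
          rw [norm_smul, Real.norm_eq_abs, abs_of_nonneg hsnn] at hnorm2
          have : s * ‖y‖ = R + ‖y1‖ + 1 := by
            rw [hs]; field_simp
          linarith
        rw [hy0', ← ht0]
        simp
      · -- t > 0 : scale to a feasible point
        set y' : Fin m → ℝ := (-(t⁻¹)) • y with hy'
        have hmem : y' ∈ {y : Fin m → ℝ | D.mulVec y ≤ d} := by
          intro j
          have : D.mulVec y' j = -(t⁻¹) * (D j ⬝ᵥ y) := by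
            rw [hy', Matrix.mulVec_smul]
            simp [Matrix.mulVec, dotProduct]
          rw [this]
          have h1 := hrow j
          have h2 : 0 ≤ t⁻¹ * ((D j ⬝ᵥ y) + d j * t) := mul_nonneg (by positivity) h1
          have h3 : t⁻¹ * (d j * t) = d j := by field_simp
          nlinarith
        have hmin2 : c ⬝ᵥ y0 ≤ c ⬝ᵥ y' := hy0min hmem
        have hcy' : c ⬝ᵥ y' = -(t⁻¹) * (c ⬝ᵥ y) := by
          rw [hy', dotProduct_smul, smul_eq_mul]
        rw [hcy'] at hmin2
        have hm := mul_le_mul_of_nonneg_right hmin2 htnn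
        have hcancel : -(t⁻¹) * (c ⬝ᵥ y) * t = -(c ⬝ᵥ y) := by field_simp
        linarith [hm, hcancel]
    obtain ⟨lam, hlam, hsum⟩ := farkas_s2 w b hfar
    set v : Fin p → ℝ := fun j => lam j.castSucc with hv
    have heval : ∀ i : Fin (m+1), b i = ∑ j : Fin (p+1), lam j * w j i := by
      intro i
      have := congrFun hsum i
      rw [this, Finset.sum_apply]
      exact Finset.sum_congr rfl fun j _ => rfl
    have hdual_eq : -(Dᵀ.mulVec v) = c := by
      funext i
      have := heval i.castSucc
      rw [Fin.sum_univ_castSucc] at this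
      simp only [hw, hb, Fin.lastCases_castSucc, Fin.lastCases_last, Fin.snoc_castSucc,
        Fin.snoc_last, Pi.zero_apply, mul_zero, add_zero] at this
      have : -c i = ∑ j : Fin p, lam j.castSucc * D j i := by
        simpa using this
      simp only [Pi.neg_apply, Matrix.mulVec, dotProduct, Matrix.transpose_apply]
      rw [show (∑ j, D j i * v j) = ∑ j : Fin p, lam j.castSucc * D j i from
        Finset.sum_congr rfl fun j _ => mul_comm _ _]
      linarith
    have hlast : -(c ⬝ᵥ y0) = d ⬝ᵥ v + lam (Fin.last p) := by
      have := heval (Fin.last m)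
      rw [Fin.sum_univ_castSucc] at this
      simp only [hw, hb, Fin.lastCases_castSucc, Fin.lastCases_last, Fin.snoc_last,
        mul_one] at this
      rw [this, dotProduct]
      congr 1
      exact Finset.sum_congr rfl fun j _ => mul_comm _ _
    refine ⟨v, ⟨fun j => hlam j.castSucc, hdual_eq⟩, ?_⟩
    -- -(d ⬝ᵥ v) = c ⬝ᵥ y0 : need also weak duality
    have h0 : (Dᵀ.mulVec v) ⬝ᵥ y0 = v ⬝ᵥ D.mulVec y0 := by
      rw [Matrix.mulVec_transpose, ← Matrix.dotProduct_mulVec]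
    have hweak : -(d ⬝ᵥ v) ≤ c ⬝ᵥ y0 := by
      have h1 : c ⬝ᵥ y0 = -(v ⬝ᵥ D.mulVec y0) := by
        rw [← hdual_eq, neg_dotProduct, h0]
      have h2 : v ⬝ᵥ D.mulVec y0 ≤ v ⬝ᵥ d := by
        rw [dotProduct, dotProduct]
        exact Finset.sum_le_sum fun j _ => mul_le_mul_of_nonneg_left (hy0Y j) (hlam j.castSucc)
      linarith [dotProduct_comm d v, h1, h2]
    have hge : c ⬝ᵥ y0 ≤ -(d ⬝ᵥ v) := by
      have hs0 : (0:ℝ) ≤ lam (Fin.last p) := hlam (Fin.last p)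
      linarith
    show -(d ⬝ᵥ v) = c ⬝ᵥ y0
    linarith
  · -- upper bound: weak duality
    rintro x ⟨v, ⟨hvnn, hvdual⟩, rfl⟩
    have h0 : (Dᵀ.mulVec v) ⬝ᵥ y0 = v ⬝ᵥ D.mulVec y0 := by
      rw [Matrix.mulVec_transpose, ← Matrix.dotProduct_mulVec]
    have h1 : c ⬝ᵥ y0 = -(v ⬝ᵥ D.mulVec y0) := by
      rw [← hvdual, neg_dotProduct, h0]
    have h2 : v ⬝ᵥ D.mulVec y0 ≤ v ⬝ᵥ d := by
      rw [dotProduct, dotProduct]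
      exact Finset.sum_le_sum fun j _ => mul_le_mul_of_nonneg_left (hy0Y j) (hvnn j)
    show -(d ⬝ᵥ v) ≤ c ⬝ᵥ y0
    linarith [dotProduct_comm d v, h1, h2]

/-- The dual min-max characterization for the problem with disjoint subset
`Y = {y | D y ≤ d}` (Corollary 1 of the paper). -/
theorem stmt_2
    (n m q p : ℕ) (hn : 0 < n) (hm : 0 < m) (hq : 0 < q) (hp : 0 < p)
    (C : Matrix (Fin n) (Fin m) ℝ) (A : Matrix (Fin q) (Fin n) ℝ)
    (D : Matrix (Fin p) (Fin m) ℝ)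
    (a : Fin q → ℝ) (d : Fin p → ℝ) (g : Fin n → ℝ) (e : Fin m → ℝ)
    (z : (Fin n → ℝ) → (Fin m → ℝ) → ℝ)
    (hz : ∀ x y, z x y = x ⬝ᵥ C.mulVec y + g ⬝ᵥ x + e ⬝ᵥ y)
    (X : Set (Fin n → ℝ)) (Y : Set (Fin m → ℝ))
    (hX : X = {x | A.mulVec x ≤ a ∧ 0 ≤ x})
    (hY : Y = {y | D.mulVec y ≤ d})
    (hXne : X.Nonempty) (hYne : Y.Nonempty)
    (hXbd : Bornology.IsBounded X) (hYbd : Bornology.IsBounded Y)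
    (V : (Fin n → ℝ) → Set (Fin p → ℝ))
    (hV : ∀ x, V x = {v | 0 ≤ v ∧ -(Dᵀ.mulVec v) = Cᵀ.mulVec x + e}) :
    ∀ xs ∈ X, ∀ ys ∈ Y, IsLeast (Set.image2 z X Y) (z xs ys) →
      IsLeast {w : ℝ | ∃ x ∈ X, IsGreatest ((fun v => g ⬝ᵥ x - d ⬝ᵥ v) '' V x) w} (z xs ys) ∧
      IsGreatest ((fun v => g ⬝ᵥ xs - d ⬝ᵥ v) '' V xs) (z xs ys) := by
  intro xs hxs ys hys hleast
  have hzc : ∀ x y, z x y = g ⬝ᵥ x + (Cᵀ.mulVec x + e) ⬝ᵥ y := by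
    intro x y
    rw [hz, add_dotProduct, Matrix.dotProduct_mulVec, ← Matrix.mulVec_transpose]
    ring
  have main : ∀ x ∈ X, ∃ y0 ∈ Y,
      IsGreatest ((fun v => g ⬝ᵥ x - d ⬝ᵥ v) '' V x) (z x y0) ∧ ∀ y ∈ Y, z x y0 ≤ z x y := by
    intro x hx
    obtain ⟨y0, hy0f, hy0min, hG⟩ := lp_dual D d (Cᵀ.mulVec x + e)
      (by rw [hY] at hYne; exact hYne) (by rw [hY] at hYbd; exact hYbd)
    refine ⟨y0, by rw [hY]; exact hy0f, ⟨?_, ?_⟩, ?_⟩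
    · obtain ⟨v, hvmem, hveq⟩ := hG.1
      refine ⟨v, by rw [hV]; exact hvmem, ?_⟩
      show g ⬝ᵥ x - d ⬝ᵥ v = z x y0
      rw [hzc]
      have hveq' : -(d ⬝ᵥ v) = (Cᵀ.mulVec x + e) ⬝ᵥ y0 := hveq
      have h9 : g ⬝ᵥ x - d ⬝ᵥ v = g ⬝ᵥ x + -(d ⬝ᵥ v) := by ring
      rw [h9, hveq']
    · rintro w ⟨v, hvmem, rfl⟩
      have hub := hG.2 ⟨v, by rw [hV] at hvmem; exact hvmem, rfl⟩
      rw [hzc]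
      have hub' : -(d ⬝ᵥ v) ≤ (Cᵀ.mulVec x + e) ⬝ᵥ y0 := hub
      show g ⬝ᵥ x - d ⬝ᵥ v ≤ _
      linarith [hub']
    · intro y hy
      rw [hzc, hzc]
      have := hy0min y (by rw [hY] at hy; exact hy)
      linarith
  obtain ⟨y0s, hy0sY, hGs, hmins⟩ := main xs hxs
  have hzeq : z xs ys = z xs y0s :=
    le_antisymm (hleast.2 (Set.mem_image2_of_mem hxs hy0sY)) (hmins ys hys)
  refine ⟨⟨⟨xs, hxs, hzeq ▸ hGs⟩, ?_⟩, hzeq ▸ hGs⟩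
  rintro w ⟨x, hx, hGw⟩
  obtain ⟨y0, hy0Y, hGx, hminx⟩ := main x hx
  have hwx : w = z x y0 := hGw.unique hGx
  rw [hwx]
  exact hleast.2 (Set.mem_image2_of_mem hx hy0Y)
end

section
/- Assume all entries of C, A, B and all components of a, b, g, e are integers, and that X and Y are nonempty and bounded. Let H = max{|c_{ij}|, |g_i|, |e_j| : 1 ≤ i ≤ n, 1 ≤ j ≤ m}, L₁ = Σ_{i=1}^{q} Σ_{j=0}^{n} log₂(|a_{ij}|+1) + log₂(n(q+1)) (where a_{i0} denotes the i-th component of a), L₂ = Σ_{i=1}^{l} Σ_{j=0}^{m} log₂(|b_{ij}|+1) + log₂(l(m+1)) (where b_{i0} denotes the i-th component of b), and L = L₁ + L₂ + (qm+q+m)(1 + log₂(H+1)). Then the minimum value z* of z over X × Y is a rational number expressible as a fraction M/N with integers M and N, |N| ≥ 1, such that |M| ≤ 2^L and |N| ≤ 2^L. -/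
open Matrix

set_option maxHeartbeats 1000000


lemma abs_det_le_prod_col {n : ℕ} (G : Matrix (Fin n) (Fin n) ℝ) :
    |G.det| ≤ ∏ j, ∑ i, |G i j| := by
  classical
  set co : Equiv.Perm (Fin n) → (Fin n → Fin n) := fun σ x => σ x with hco
  rw [Matrix.det_apply]
  refine (Finset.abs_sum_le_sum_abs _ _).trans ?_
  have h1 : ∀ σ : Equiv.Perm (Fin n),
      |Equiv.Perm.sign σ • ∏ i, G (σ i) i| = ∏ i, |G (σ i) i| := by
    intro σ
    rcases Int.units_eq_one_or (Equiv.Perm.sign σ) with h | h <;>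
      simp [h, Finset.abs_prod]
  simp_rw [h1]
  rw [Finset.prod_univ_sum]
  have hinj : ∀ x ∈ (Finset.univ : Finset (Equiv.Perm (Fin n))), ∀ y ∈ Finset.univ,
      co x = co y → x = y := by
    intro x _ y _ h
    apply Equiv.coe_fn_injective
    funext i
    exact congrFun h i
  have h2 : ∑ σ : Equiv.Perm (Fin n), ∏ i, |G (σ i) i|
      = ∑ f ∈ (Finset.univ : Finset (Equiv.Perm (Fin n))).image co,
          ∏ i, |G (f i) i| :=
    (Finset.sum_image (g := co) (f := fun f : Fin n → Fin n => ∏ i, |G (f i) i|) hinj).symm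
  rw [h2]
  refine Finset.sum_le_sum_of_subset_of_nonneg ?_ ?_
  · intro f _; simp [Fintype.mem_piFinset]
  · intro f _ _; exact Finset.prod_nonneg fun i _ => abs_nonneg _

lemma abs_det_le_prod_row {n : ℕ} (G : Matrix (Fin n) (Fin n) ℝ) :
    |G.det| ≤ ∏ i, ∑ j, |G i j| := by
  have := abs_det_le_prod_col Gᵀ
  rwa [Matrix.det_transpose] at this

lemma sum_abs_update_le {n : ℕ} (f : Fin n → ℝ) (i : Fin n) (v : ℝ) :
    ∑ j, |Function.update f i v j| ≤ |v| + ∑ j, |f j| := by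
  classical
  rw [← Finset.add_sum_erase _ _ (Finset.mem_univ i)]
  simp only [Function.update_self]
  gcongr
  calc ∑ j ∈ Finset.univ.erase i, |Function.update f i v j|
      = ∑ j ∈ Finset.univ.erase i, |f j| := by
        apply Finset.sum_congr rfl
        intro j hj
        rw [Function.update_of_ne (Finset.ne_of_mem_erase hj)]
    _ ≤ ∑ j, |f j| := Finset.sum_le_sum_of_subset_of_nonneg
        (Finset.erase_subset _ _) (fun _ _ _ => abs_nonneg _)

-- extraction of a basic solution
lemma basic_solution {ι : Type} [Fintype ι] [DecidableEq ι] {n : ℕ}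
    (M : Matrix ι (Fin n) ℝ) (r : ι → ℝ)
    (hMint : ∀ i j, ∃ z : ℤ, M i j = (z : ℝ)) (hrint : ∀ i, ∃ z : ℤ, r i = (z : ℝ))
    (x : Fin n → ℝ) (T : Finset ι)
    (hT : ∀ i ∈ T, M.mulVec x i = r i)
    (hspan : Submodule.span ℝ (Set.range (fun i : {i // i ∈ T} => M i.1)) = ⊤) :
    ∃ D : ℤ, D ≠ 0 ∧ (|D| : ℝ) ≤ ∏ i, max 1 (|r i| + ∑ j, |M i j|) ∧
      ∀ i, ∃ p : ℤ, x i = (p : ℝ) / (D : ℝ) ∧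
        (|p| : ℝ) ≤ ∏ i', max 1 (|r i'| + ∑ j, |M i' j|) := by
  classical
  set w : ι → ℝ := fun i => |r i| + ∑ j, |M i j| with hw
  -- extract a linearly independent spanning subfamily
  obtain ⟨b, hbsub, hbspan, hbli⟩ :=
    exists_linearIndependent ℝ (Set.range (fun i : {i // i ∈ T} => M i.1))
  rw [hspan] at hbspan
  have hbfin : b.Finite := (Set.finite_range _).subset hbsub
  haveI : Fintype b := hbfin.fintype
  -- b is a basis of ℝ^n
  let bas : Module.Basis b ℝ (Fin n → ℝ) := Module.Basis.mk hbli (by rw [Subtype.range_coe, hbspan])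
  have hcard : Fintype.card b = n := by
    have := Module.finrank_eq_card_basis bas
    simpa [Module.finrank_pi] using this.symm
  obtain ⟨ι0⟩ : Nonempty (Fin n ≃ b) := by
    exact ⟨(Fintype.equivFinOfCardEq hcard).symm⟩
  set e : Fin n → (Fin n → ℝ) := fun i => (ι0 i : Fin n → ℝ) with he
  have heli : LinearIndependent ℝ e := hbli.comp ι0 ι0.injective
  have heinj : Function.Injective e := heli.injective
  -- choose row indices
  have hsel : ∀ i : Fin n, ∃ k : ι, k ∈ T ∧ M k = e i := by
    intro i
    have : (e i : Fin n → ℝ) ∈ Set.range (fun i : {i // i ∈ T} => M i.1) :=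
      hbsub (ι0 i).2
    obtain ⟨k, hk⟩ := this
    exact ⟨k.1, k.2, hk⟩
  choose σ hσT hσM using hsel
  have hσinj : Function.Injective σ := by
    intro i i' h
    apply heinj
    rw [← hσM, ← hσM, h]
  -- the square matrix
  set G : Matrix (Fin n) (Fin n) ℝ := Matrix.of (fun i j => M (σ i) j) with hG
  have hGrow : ∀ i, G i = e i := by
    intro i; funext j; simp [hG, ← hσM i]
  have hGli : LinearIndependent ℝ (fun i => G i) := by
    simp only [funext hGrow]; exact heli
  have hGunit : IsUnit G := Matrix.linearIndependent_rows_iff_isUnit.mp hGli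
  have hGdet : IsUnit G.det := (Matrix.isUnit_iff_isUnit_det G).mp hGunit
  have hGdetne : G.det ≠ 0 := hGdet.ne_zero
  -- integer entries
  choose Mz hMz using hMint
  choose rz hrz using hrint
  set Gz : Matrix (Fin n) (Fin n) ℤ := Matrix.of (fun i j => Mz (σ i) j) with hGz
  have hGmap : Gz.map (Int.cast : ℤ → ℝ) = G := by
    ext i j; simp [hGz, hG, hMz]
  set rσ : Fin n → ℝ := fun i => r (σ i) with hrσ
  -- Cramer's rule
  have hGx : G.mulVec x = rσ := by
    funext i
    have : G.mulVec x i = M.mulVec x (σ i) := rfl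
    rw [this, hT _ (hσT i)]
  have hcram : Matrix.cramer G rσ = G.det • x := by
    apply (Matrix.mulVec_injective_iff_isUnit.mpr hGunit)
    rw [Matrix.mulVec_cramer, Matrix.mulVec_smul, hGx]
  set D : ℤ := Gz.det with hD
  have hDcast : (D : ℝ) = G.det := by
    rw [hD, ← hGmap]
    exact (RingHom.map_det (Int.castRingHom ℝ) Gz)
  have hDne : D ≠ 0 := by
    intro h
    rw [h] at hDcast
    exact hGdetne (by exact_mod_cast hDcast.symm)
  -- bound on |D|
  have hwσ : ∀ i : Fin n, ∑ j, |G i j| ≤ max 1 (w (σ i)) := by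
    intro i
    refine le_max_of_le_right ?_
    have : (0:ℝ) ≤ |r (σ i)| := abs_nonneg _
    simp only [hw]
    calc ∑ j, |G i j| = ∑ j, |M (σ i) j| := rfl
      _ ≤ |r (σ i)| + ∑ j, |M (σ i) j| := by linarith
  have hprodle : ∀ f : Fin n → ℝ, (∀ i, f i ≤ max 1 (w (σ i))) → (∀ i, 0 ≤ f i) →
      ∏ i, f i ≤ ∏ i', max 1 (|r i'| + ∑ j, |M i' j|) := by
    intro f hf hf0
    calc ∏ i, f i ≤ ∏ i, max 1 (w (σ i)) := Finset.prod_le_prod (fun i _ => hf0 i) (fun i _ => hf i)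
      _ = ∏ k ∈ Finset.univ.image σ, max 1 (w k) := by
          rw [Finset.prod_image (fun a _ b _ h => hσinj h)]
      _ ≤ ∏ i', max 1 (w i') := by
          have hsub : Finset.univ.image σ ⊆ Finset.univ := Finset.subset_univ _
          rw [← Finset.prod_sdiff hsub]
          have h0 : (0:ℝ) ≤ ∏ k ∈ Finset.univ.image σ, max 1 (w k) :=
            Finset.prod_nonneg fun k _ => le_trans zero_le_one (le_max_left _ _)
          have h1 : (1:ℝ) ≤ ∏ k ∈ Finset.univ \ Finset.univ.image σ, max 1 (w k) := by
            calc (1:ℝ) = ∏ _k ∈ Finset.univ \ Finset.univ.image σ, 1 := by simp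
              _ ≤ _ := Finset.prod_le_prod (fun _ _ => zero_le_one)
                  (fun k _ => le_max_left _ _)
          nlinarith
      _ = ∏ i', max 1 (|r i'| + ∑ j, |M i' j|) := rfl
  refine ⟨D, hDne, ?_, ?_⟩
  · have h1 : |(D:ℝ)| ≤ ∏ i, ∑ j, |G i j| := by rw [hDcast]; exact abs_det_le_prod_row G
    have := hprodle (fun i => ∑ j, |G i j|) hwσ (fun i => Finset.sum_nonneg fun _ _ => abs_nonneg _)
    calc (|D| : ℝ) = |(D : ℝ)| := by push_cast; ring
      _ ≤ _ := h1.trans this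
  · intro i
    set p : ℤ := (Gz.updateCol i (fun k => rz (σ k))).det with hp
    have hpmap : (Gz.updateCol i (fun k => rz (σ k))).map (Int.cast : ℤ → ℝ)
        = G.updateCol i rσ := by
      ext a bcol
      by_cases h : bcol = i <;>
        simp [Matrix.updateCol_apply, h, hGz, hG, hMz, hrz, hrσ]
    have hpcast : (p : ℝ) = (G.updateCol i rσ).det := by
      rw [hp, ← hpmap]
      exact (RingHom.map_det (Int.castRingHom ℝ) _)
    have hxi : x i = (p : ℝ) / (D : ℝ) := by
      have h1 : Matrix.cramer G rσ i = (G.updateCol i rσ).det := Matrix.cramer_apply _ _ _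
      have h2 : (G.det • x) i = G.det * x i := rfl
      have h3 : G.det * x i = (p:ℝ) := by rw [hpcast, ← h1, hcram]; rfl
      rw [hDcast]
      field_simp
      linarith [h3]
    refine ⟨p, hxi, ?_⟩
    have h1 : |(p:ℝ)| ≤ ∏ k, ∑ j, |G.updateCol i rσ k j| := by
      rw [hpcast]; exact abs_det_le_prod_row _
    have h2 : ∀ k, ∑ j, |G.updateCol i rσ k j| ≤ max 1 (w (σ k)) := by
      intro k
      have hupd : (fun j => G.updateCol i rσ k j) = Function.update (G k) i (rσ k) := by
        funext j
        by_cases h : j = i <;> simp [Matrix.updateCol_apply, h, Function.update]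
      calc ∑ j, |G.updateCol i rσ k j| = ∑ j, |Function.update (G k) i (rσ k) j| :=
            Finset.sum_congr rfl (fun j _ => by rw [congrFun hupd j])
        _ ≤ |rσ k| + ∑ j, |G k j| := sum_abs_update_le _ _ _
        _ ≤ max 1 (w (σ k)) := by
            refine le_max_of_le_right ?_
            simp only [hw, hrσ]
            calc |r (σ k)| + ∑ j, |G k j| = |r (σ k)| + ∑ j, |M (σ k) j| := rfl
              _ ≤ _ := le_refl _
      
    have := hprodle (fun k => ∑ j, |G.updateCol i rσ k j|) h2
        (fun k => Finset.sum_nonneg fun _ _ => abs_nonneg _)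
    calc (|p| : ℝ) = |(p : ℝ)| := by push_cast; ring
      _ ≤ _ := h1.trans this

lemma poly_min {ι : Type} [Fintype ι] [DecidableEq ι] {n : ℕ}
    (M : Matrix ι (Fin n) ℝ) (r : ι → ℝ)
    (hMint : ∀ i j, ∃ z : ℤ, M i j = (z : ℝ)) (hrint : ∀ i, ∃ z : ℤ, r i = (z : ℝ))
    (hne : {x : Fin n → ℝ | M.mulVec x ≤ r}.Nonempty)
    (hbd : Bornology.IsBounded {x : Fin n → ℝ | M.mulVec x ≤ r})
    (c : Fin n → ℝ) :
    ∃ x, M.mulVec x ≤ r ∧ (∀ y, M.mulVec y ≤ r → c ⬝ᵥ x ≤ c ⬝ᵥ y) ∧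
      ∃ D : ℤ, D ≠ 0 ∧ (|D| : ℝ) ≤ ∏ i, max 1 (|r i| + ∑ j, |M i j|) ∧
      ∀ i, ∃ p : ℤ, x i = (p : ℝ) / (D : ℝ) ∧
        (|p| : ℝ) ≤ ∏ i', max 1 (|r i'| + ∑ j, |M i' j|) := by
  classical
  set S := {x : Fin n → ℝ | M.mulVec x ≤ r} with hS
  have hmemS : ∀ y, y ∈ S ↔ ∀ i, M.mulVec y i ≤ r i := by
    intro y; constructor
    · intro h i; exact h i
    · intro h i; exact h i
  -- continuity of linear maps
  have hcontrow : ∀ (v : Fin n → ℝ), Continuous (fun y : Fin n → ℝ => v ⬝ᵥ y) := by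
    intro v
    unfold dotProduct
    exact continuous_finset_sum _ fun j _ => (continuous_const.mul (continuous_apply j))
  have hScl : IsClosed S := by
    have : S = ⋂ i, {y : Fin n → ℝ | M.mulVec y i ≤ r i} := by
      ext y; simp [hmemS, Set.mem_iInter]
    rw [this]
    exact isClosed_iInter fun i => isClosed_le (hcontrow (M i)) continuous_const
  have hScomp : IsCompact S := Metric.isCompact_of_isClosed_isBounded hScl hbd
  obtain ⟨x₀, hx₀S, hx₀min⟩ := hScomp.exists_isMinOn hne (hcontrow c).continuousOn
  set tight : (Fin n → ℝ) → Finset ι :=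
    fun y => Finset.univ.filter (fun i => M.mulVec y i = r i) with htight
  set W := {y | y ∈ S ∧ ∀ v ∈ S, c ⬝ᵥ y ≤ c ⬝ᵥ v} with hW
  have hWx₀ : x₀ ∈ W := ⟨hx₀S, fun v hv => hx₀min hv⟩
  set K := {k : ℕ | ∃ y ∈ W, (tight y).card = k} with hK
  have hKne : K.Nonempty := ⟨(tight x₀).card, x₀, hWx₀, rfl⟩
  have hKbdd : BddAbove K := by
    refine ⟨Fintype.card ι, ?_⟩
    rintro k ⟨y, _, hk⟩
    rw [← hk]
    exact Finset.card_le_univ _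
  have hrowaff : ∀ (y dd : Fin n → ℝ) (t : ℝ) (i : ι),
      M.mulVec (y + t • dd) i = M.mulVec y i + t * (M i ⬝ᵥ dd) := by
    intro y dd t i
    rw [Matrix.mulVec_add, Matrix.mulVec_smul]
    rfl
  obtain ⟨x, hxW, hxcard⟩ := Nat.sSup_mem hKne hKbdd
  have hmaxcard : ∀ y ∈ W, (tight y).card ≤ (tight x).card := by
    intro y hy
    rw [hxcard]
    exact le_csSup hKbdd ⟨y, hy, rfl⟩
  have hxS : x ∈ S := hxW.1
  -- main claim : tight rows span
  have hspan : Submodule.span ℝ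
      (Set.range (fun i : {i // i ∈ tight x} => M i.1)) = ⊤ := by
    by_contra hns
    -- A: find a direction d
    have hA : ∃ d : Fin n → ℝ, d ≠ 0 ∧ ∀ i ∈ tight x, M i ⬝ᵥ d = 0 := by
      set N : Matrix {i // i ∈ tight x} (Fin n) ℝ := Matrix.of (fun i j => M i.1 j) with hN
      by_contra hc
      push_neg at hc
      have hker : ∀ d, N.mulVec d = 0 → d = 0 := by
        intro d hd
        by_contra hd0
        obtain ⟨i, hiT, hine⟩ := hc d hd0
        have : N.mulVec d ⟨i, hiT⟩ = 0 := by rw [hd]; rfl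
        exact hine this
      have hinj : Function.Injective N.mulVecLin := by
        rw [← LinearMap.ker_eq_bot]
        apply LinearMap.ker_eq_bot'.mpr
        intro d hd
        exact hker d hd
      have hrank : N.rank = n := by
        rw [Matrix.rank, LinearMap.finrank_range_of_inj hinj]
        simp [Module.finrank_pi]
      have hrankT : Nᵀ.rank = n := by rw [Matrix.rank_transpose]; exact hrank
      have htop : LinearMap.range Nᵀ.mulVecLin = ⊤ := by
        apply Submodule.eq_top_of_finrank_eq
        rw [← Matrix.rank] at *
        rw [hrankT]
        simp [Module.finrank_pi]
      rw [Matrix.range_mulVecLin] at htop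
      apply hns
      have : Set.range (fun i : {i // i ∈ tight x} => M i.1)
          = Set.range (fun i : {i // i ∈ tight x} => N i) := by
        congr 1
      rw [this]
      exact htop
    obtain ⟨d, hdne, hd0⟩ := hA
    -- B : some row increases along d
    have hB : ∃ i, 0 < M i ⬝ᵥ d := by
      by_contra hcon
      push_neg at hcon
      have hray : ∀ t : ℝ, 0 ≤ t → x + t • d ∈ S := by
        intro t ht
        rw [hmemS]
        intro i
        rw [hrowaff]
        have h1 : t * (M i ⬝ᵥ d) ≤ 0 := mul_nonpos_of_nonneg_of_nonpos ht (hcon i)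
        have h2 := (hmemS x).mp hxS i
        linarith
      obtain ⟨Cb, hCb⟩ := isBounded_iff_forall_norm_le.mp hbd
      obtain ⟨j, hj⟩ : ∃ j, d j ≠ 0 := by
        by_contra hc2
        push_neg at hc2
        exact hdne (funext hc2)
      set t : ℝ := (Cb + ‖x‖ + 1) / |d j| with hts
      have hdj : 0 < |d j| := abs_pos.mpr hj
      have hCb0 : 0 ≤ Cb := le_trans (norm_nonneg _) (hCb x hxS)
      have hxn : 0 ≤ ‖x‖ := norm_nonneg _
      have ht : 0 ≤ t := by positivity
      have hyS := hray t ht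
      have hnorm := hCb _ hyS
      have hxj : |x j| ≤ ‖x‖ := by simpa using norm_le_pi_norm x j
      have hyj : |(x + t • d) j| ≤ ‖x + t • d‖ := by simpa using norm_le_pi_norm (x + t • d) j
      have h1 : (x + t • d) j = x j + t * d j := rfl
      have h4 : |t * d j| = t * |d j| := by rw [abs_mul, abs_of_nonneg ht]
      have h5 : t * |d j| = Cb + ‖x‖ + 1 := by
        rw [hts, div_mul_cancel₀]
        exact ne_of_gt hdj
      have h2 : |t * d j| - |x j| ≤ |x j + t * d j| := by
        have := abs_sub_abs_le_abs_sub (t * d j) (-(x j))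
        simp only [abs_neg, sub_neg_eq_add] at this
        calc |t * d j| - |x j| ≤ |t * d j + x j| := this
          _ = |x j + t * d j| := by rw [add_comm]
      rw [h1] at hyj
      linarith
    -- D : c ⬝ᵥ d = 0
    -- nontight rows
    set NT := Finset.univ.filter (fun i => M.mulVec x i < r i) with hNT
    have hNTmem : ∀ i, i ∉ tight x → i ∈ NT := by
      intro i hi
      simp only [htight, Finset.mem_filter, Finset.mem_univ, true_and] at hi
      simp only [hNT, Finset.mem_filter, Finset.mem_univ, true_and]
      exact lt_of_le_of_ne ((hmemS x).mp hxS i) hi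
    have hJNT : ∀ i, 0 < M i ⬝ᵥ d → i ∈ NT := by
      intro i hiJ
      apply hNTmem
      intro hitight
      rw [hd0 i hitight] at hiJ
      exact lt_irrefl _ hiJ
    have hNTne : NT.Nonempty := by
      obtain ⟨i, hi⟩ := hB
      exact ⟨i, hJNT i hi⟩
    set ε : ℝ := NT.inf' hNTne (fun i => (r i - M.mulVec x i) / (|M i ⬝ᵥ d| + 1)) with hε
    have hεpos : 0 < ε := by
      rw [hε, Finset.lt_inf'_iff]
      intro i hi
      simp only [hNT, Finset.mem_filter, Finset.mem_univ, true_and] at hi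
      have : 0 ≤ |M i ⬝ᵥ d| := abs_nonneg _
      apply div_pos <;> linarith
    have hmove : ∀ s : ℝ, |s| ≤ ε → x + s • d ∈ S := by
      intro s hs
      rw [hmemS]
      intro i
      rw [hrowaff]
      by_cases hi : i ∈ tight x
      · rw [hd0 i hi]
        simp only [htight, Finset.mem_filter, Finset.mem_univ, true_and] at hi
        rw [mul_zero, add_zero, hi]
      · have hiNT := hNTmem i hi
        have hεle : ε ≤ (r i - M.mulVec x i) / (|M i ⬝ᵥ d| + 1) :=
          Finset.inf'_le _ hiNT
        have h1 : s * (M i ⬝ᵥ d) ≤ |s| * |M i ⬝ᵥ d| := by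
          calc s * (M i ⬝ᵥ d) ≤ |s * (M i ⬝ᵥ d)| := le_abs_self _
            _ = |s| * |M i ⬝ᵥ d| := abs_mul _ _
        have h2 : |s| * |M i ⬝ᵥ d| ≤ ε * |M i ⬝ᵥ d| :=
          mul_le_mul_of_nonneg_right hs (abs_nonneg _)
        have habs : 0 ≤ |M i ⬝ᵥ d| := abs_nonneg _
        have hiNT' : M.mulVec x i < r i := by
          simpa [hNT] using hiNT
        have h3 : ε * |M i ⬝ᵥ d| ≤ r i - M.mulVec x i := by
          have h4 : ε * (|M i ⬝ᵥ d| + 1) ≤ r i - M.mulVec x i := by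
            calc ε * (|M i ⬝ᵥ d| + 1)
                ≤ ((r i - M.mulVec x i) / (|M i ⬝ᵥ d| + 1)) * (|M i ⬝ᵥ d| + 1) := by
                  apply mul_le_mul_of_nonneg_right hεle
                  linarith
              _ = r i - M.mulVec x i := by
                  rw [div_mul_cancel₀]
                  linarith
          nlinarith [hεpos]
        linarith
    have hcd : c ⬝ᵥ d = 0 := by
      have hdot : ∀ s : ℝ, c ⬝ᵥ (x + s • d) = c ⬝ᵥ x + s * (c ⬝ᵥ d) := by
        intro s
        rw [dotProduct_add, dotProduct_smul]
        simp [smul_eq_mul]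
      have hp := hxW.2 _ (hmove ε (by rw [abs_of_pos hεpos]))
      have hm := hxW.2 _ (hmove (-ε) (by rw [abs_neg, abs_of_pos hεpos]))
      rw [hdot] at hp hm
      nlinarith [hεpos]
    -- E : move to a new tight constraint
    set J := Finset.univ.filter (fun i => 0 < M i ⬝ᵥ d) with hJ
    have hJne : J.Nonempty := by
      obtain ⟨i, hi⟩ := hB
      exact ⟨i, by simp [hJ, hi]⟩
    set t' : ℝ := J.inf' hJne (fun i => (r i - M.mulVec x i) / (M i ⬝ᵥ d)) with ht'
    have hJpos : ∀ i ∈ J, 0 < M i ⬝ᵥ d := by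
      intro i hi; simpa [hJ] using hi
    have hJnontight : ∀ i ∈ J, M.mulVec x i < r i := by
      intro i hi
      have hiNT := hJNT i (hJpos i hi)
      simpa [hNT] using hiNT
    have ht'pos : 0 < t' := by
      rw [ht', Finset.lt_inf'_iff]
      intro i hi
      exact div_pos (by linarith [hJnontight i hi]) (hJpos i hi)
    obtain ⟨i₀, hi₀J, hi₀eq⟩ := Finset.exists_mem_eq_inf' hJne
        (fun i => (r i - M.mulVec x i) / (M i ⬝ᵥ d))
    set x' := x + t' • d with hx'
    have hx'mul : ∀ i, M.mulVec x' i = M.mulVec x i + t' * (M i ⬝ᵥ d) := by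
      intro i
      rw [hx', hrowaff]
    have hx'S : x' ∈ S := by
      rw [hmemS]
      intro i
      rw [hx'mul]
      by_cases hi : 0 < M i ⬝ᵥ d
      · have hiJ : i ∈ J := by simp [hJ, hi]
        have : t' ≤ (r i - M.mulVec x i) / (M i ⬝ᵥ d) := Finset.inf'_le _ hiJ
        have := mul_le_mul_of_nonneg_right this (le_of_lt hi)
        rw [div_mul_cancel₀ _ (ne_of_gt hi)] at this
        linarith
      · push_neg at hi
        have h1 : t' * (M i ⬝ᵥ d) ≤ 0 := mul_nonpos_of_nonneg_of_nonpos (le_of_lt ht'pos) hi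
        have h2 := (hmemS x).mp hxS i
        linarith
    have hx'W : x' ∈ W := by
      refine ⟨hx'S, ?_⟩
      intro v hv
      have : c ⬝ᵥ x' = c ⬝ᵥ x := by
        rw [hx', dotProduct_add, dotProduct_smul]
        simp [smul_eq_mul, hcd]
      rw [this]
      exact hxW.2 v hv
    have hsub : tight x ⊆ tight x' := by
      intro i hi
      have h0 := hd0 i hi
      simp only [htight, Finset.mem_filter, Finset.mem_univ, true_and] at hi ⊢
      rw [hx'mul, h0, mul_zero, add_zero]
      exact hi
    have hi₀new : i₀ ∈ tight x' := by
      simp only [htight, Finset.mem_filter, Finset.mem_univ, true_and]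
      have hpos := hJpos i₀ hi₀J
      rw [hx'mul, ht', hi₀eq, div_mul_cancel₀ _ (ne_of_gt hpos)]
      ring
    have hi₀old : i₀ ∉ tight x := by
      intro hc
      have := hd0 i₀ hc
      have := hJpos i₀ hi₀J
      linarith
    have hss : tight x ⊂ tight x' := ⟨hsub, fun h => hi₀old (h hi₀new)⟩
    have := hmaxcard x' hx'W
    have := Finset.card_lt_card hss
    omega
  -- conclude
  have hTeq : ∀ i ∈ tight x, M.mulVec x i = r i := by
    intro i hi
    simpa [htight] using hi
  obtain ⟨D, hD1, hD2, hD3⟩ := basic_solution M r hMint hrint x (tight x) hTeq hspan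
  exact ⟨x, hxS, fun y hy => hxW.2 y hy, D, hD1, hD2, hD3⟩

lemma one_add_sum_le_prod {α : Type*} (s : Finset α) (t : α → ℝ) (h : ∀ j ∈ s, 0 ≤ t j) :
    1 + ∑ j ∈ s, t j ≤ ∏ j ∈ s, (1 + t j) := by
  classical
  induction s using Finset.cons_induction with
  | empty => simp
  | cons i s his ih =>
    rw [Finset.sum_cons, Finset.prod_cons]
    have h0 : 0 ≤ t i := h i (Finset.mem_cons_self _ _)
    have ih' := ih (fun j hj => h j (Finset.mem_cons_of_mem hj))
    have hs0 : 0 ≤ ∑ j ∈ s, t j := Finset.sum_nonneg (fun j hj => h j (Finset.mem_cons_of_mem hj))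
    nlinarith


lemma side_min {q n : ℕ}
    (A : Matrix (Fin q) (Fin n) ℝ) (a : Fin q → ℝ)
    (hAint : ∀ i j, ∃ k : ℤ, A i j = (k : ℝ)) (haint : ∀ i, ∃ k : ℤ, a i = (k : ℝ))
    (X : Set (Fin n → ℝ)) (hX : X = {x | A.mulVec x ≤ a ∧ 0 ≤ x})
    (hXne : X.Nonempty) (hXbd : Bornology.IsBounded X) (c : Fin n → ℝ) :
    ∃ x ∈ X, (∀ y ∈ X, c ⬝ᵥ x ≤ c ⬝ᵥ y) ∧
      ∃ D : ℤ, D ≠ 0 ∧ (|D| : ℝ) ≤ ∏ i, ((|a i| + 1) * ∏ j, (|A i j| + 1)) ∧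
      ∀ i, ∃ p : ℤ, x i = (p : ℝ) / (D : ℝ) ∧
        (|p| : ℝ) ≤ ∏ i', ((|a i'| + 1) * ∏ j, (|A i' j| + 1)) := by
  classical
  set MX : Matrix (Fin q ⊕ Fin n) (Fin n) ℝ :=
    Matrix.of (Sum.elim (fun i j => A i j) (fun k j => if j = k then (-1:ℝ) else 0)) with hMX
  set rX : Fin q ⊕ Fin n → ℝ := Sum.elim a (fun _ => (0:ℝ)) with hrX
  have hmulinr : ∀ (x : Fin n → ℝ) (k : Fin n), MX.mulVec x (Sum.inr k) = -x k := by
    intro x k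
    show ∑ j, (if j = k then (-1:ℝ) else 0) * x j = -x k
    rw [Finset.sum_eq_single k]
    · simp
    · intro j _ hj; simp [hj]
    · intro h; exact absurd (Finset.mem_univ k) h
  have hmulinl : ∀ (x : Fin n → ℝ) (i : Fin q), MX.mulVec x (Sum.inl i) = A.mulVec x i := by
    intro x i; rfl
  have hfeas : {x : Fin n → ℝ | MX.mulVec x ≤ rX} = X := by
    rw [hX]
    ext x
    constructor
    · intro h
      refine ⟨fun i => ?_, fun k => ?_⟩
      · have := h (Sum.inl i); rwa [hmulinl] at this
      · have := h (Sum.inr k); rw [hmulinr] at this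
        have hr0 : rX (Sum.inr k) = 0 := rfl
        rw [hr0] at this
        simp only [Pi.zero_apply]
        linarith
    · rintro ⟨h1, h2⟩ i
      cases i with
      | inl i => rw [hmulinl]; exact h1 i
      | inr k =>
        rw [hmulinr]
        have hr0 : rX (Sum.inr k) = 0 := rfl
        rw [hr0]
        have h2k : (0:ℝ) ≤ x k := h2 k
        linarith
  have hMint : ∀ i j, ∃ z : ℤ, MX i j = (z : ℝ) := by
    rintro (i | k) j
    · exact hAint i j
    · by_cases h : j = k
      · exact ⟨-1, by simp [hMX, h]⟩
      · exact ⟨0, by simp [hMX, h]⟩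
  have hrint : ∀ i, ∃ z : ℤ, rX i = (z : ℝ) := by
    rintro (i | k)
    · exact haint i
    · exact ⟨0, by simp [hrX]⟩
  obtain ⟨x, hxfeas, hxmin, D, hD1, hD2, hD3⟩ :=
    poly_min MX rX hMint hrint (hfeas ▸ hXne) (hfeas ▸ hXbd) c
  -- compute the product bound
  have hprod : (∏ i, max 1 (|rX i| + ∑ j, |MX i j|))
      ≤ ∏ i, ((|a i| + 1) * ∏ j, (|A i j| + 1)) := by
    rw [Fintype.prod_sum_type]
    have hinr : ∀ k : Fin n, max 1 (|rX (Sum.inr k)| + ∑ j, |MX (Sum.inr k) j|) = 1 := by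
      intro k
      have h1 : |rX (Sum.inr k)| = 0 := by simp [hrX]
      have h2 : ∑ j, |MX (Sum.inr k) j| = 1 := by
        show ∑ j, |if j = k then (-1:ℝ) else 0| = 1
        rw [Finset.sum_eq_single k]
        · simp
        · intro j _ hj; simp [hj]
        · intro h; exact absurd (Finset.mem_univ k) h
      rw [h1, h2]; norm_num
    have hinl : ∀ i : Fin q, max 1 (|rX (Sum.inl i)| + ∑ j, |MX (Sum.inl i) j|)
        ≤ (|a i| + 1) * ∏ j, (|A i j| + 1) := by
      intro i
      have h1 : |rX (Sum.inl i)| = |a i| := rfl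
      have h2 : (∑ j, |MX (Sum.inl i) j|) = ∑ j, |A i j| := rfl
      rw [h1, h2]
      have hple : 1 + ∑ j, |A i j| ≤ ∏ j, (1 + |A i j|) :=
        one_add_sum_le_prod Finset.univ _ (fun j _ => abs_nonneg _)
      have hprodeq : (∏ j, (1 + |A i j|)) = ∏ j, (|A i j| + 1) := by
        apply Finset.prod_congr rfl; intro j _; ring
      rw [hprodeq] at hple
      have ha0 : 0 ≤ |a i| := abs_nonneg _
      have hs0 : 0 ≤ ∑ j, |A i j| := Finset.sum_nonneg fun j _ => abs_nonneg _
      have hp1 : (1:ℝ) ≤ ∏ j, (|A i j| + 1) := le_trans (by linarith) hple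
      rw [max_le_iff]
      constructor
      · nlinarith
      · nlinarith
    calc (∏ i, max 1 (|rX (Sum.inl i)| + ∑ j, |MX (Sum.inl i) j|)) *
          ∏ k, max 1 (|rX (Sum.inr k)| + ∑ j, |MX (Sum.inr k) j|)
        = ∏ i, max 1 (|rX (Sum.inl i)| + ∑ j, |MX (Sum.inl i) j|) := by
          rw [Finset.prod_congr rfl (fun k _ => hinr k)]; simp
      _ ≤ ∏ i, ((|a i| + 1) * ∏ j, (|A i j| + 1)) :=
          Finset.prod_le_prod (fun i _ => le_trans zero_le_one (le_max_left _ _))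
            (fun i _ => hinl i)
  refine ⟨x, ?_, ?_, D, hD1, le_trans hD2 hprod, fun i => ?_⟩
  · rw [← hfeas]; exact hxfeas
  · intro y hy
    exact hxmin y (by rw [← hfeas] at hy; exact hy)
  · obtain ⟨p, hp1, hp2⟩ := hD3 i
    exact ⟨p, hp1, le_trans hp2 hprod⟩


lemma one_le_prod_real {α : Type*} (s : Finset α) (f : α → ℝ) (h : ∀ i ∈ s, 1 ≤ f i) :
    1 ≤ ∏ i ∈ s, f i := by
  calc (1:ℝ) = ∏ _i ∈ s, 1 := by simp
    _ ≤ ∏ i ∈ s, f i := Finset.prod_le_prod (fun _ _ => zero_le_one) h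

lemma sum_logb_eq {α : Type*} (s : Finset α) (f : α → ℝ) (hf : ∀ i ∈ s, 0 < f i) :
    ∑ i ∈ s, Real.logb 2 (f i) = Real.logb 2 (∏ i ∈ s, f i) := by
  unfold Real.logb
  rw [← Finset.sum_div, Real.log_prod (fun i hi => (hf i hi).ne')]

lemma rpow_logb_self (x : ℝ) (hx : 0 < x) : (2:ℝ) ^ Real.logb 2 x = x :=
  Real.rpow_logb two_pos (by norm_num) hx

lemma helper_cube (H : ℝ) (h : 0 ≤ H) : 8*H + 8 ≤ 8*(H+1)^3 := by
  nlinarith [sq_nonneg H, sq_nonneg (H+1), mul_nonneg h (sq_nonneg (H+1)), mul_nonneg h h, mul_nonneg (mul_nonneg h h) h]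

lemma helper_key (nR mR qR lR H T3 : ℝ) (hn : 1 ≤ nR) (hm : 1 ≤ mR) (hq : 1 ≤ qR)
    (hl : 1 ≤ lR) (hH : 0 ≤ H) (hT3 : 8*H + 8 ≤ T3) :
    H * (nR*mR + nR + mR) ≤ (nR*(qR+1)) * (lR*(mR+1)) * T3 := by
  have h0n : (0:ℝ) ≤ nR := by linarith
  have h0m : (0:ℝ) ≤ mR := by linarith
  have e1 : nR + mR ≤ 2*nR*mR := by nlinarith
  have e2 : H * (nR*mR + nR + mR) ≤ 3*(nR*mR)*H := by nlinarith
  have a1 : 2*nR ≤ nR*(qR+1) := by nlinarith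
  have a2 : mR ≤ lR*(mR+1) := by nlinarith
  have a3 : (0:ℝ) ≤ T3 := by linarith
  have step1 : 3*(nR*mR)*H ≤ (2*nR) * (mR * (8*H+8)) := by nlinarith
  have step2 : (2*nR) * (mR * (8*H+8)) ≤ (nR*(qR+1)) * (lR*(mR+1) * T3) := by
    apply mul_le_mul a1 (mul_le_mul a2 hT3 (by linarith) (by linarith)) (by positivity)
      (by nlinarith)
  calc H * (nR*mR + nR + mR) ≤ 3*(nR*mR)*H := e2
    _ ≤ (2*nR) * (mR * (8*H+8)) := step1
    _ ≤ (nR*(qR+1)) * (lR*(mR+1) * T3) := step2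
    _ = (nR*(qR+1)) * (lR*(mR+1)) * T3 := by ring

lemma helper_NN (PA PB nq lm T3 : ℝ) (h1 : 1 ≤ PA) (h2 : 1 ≤ PB) (h3 : 1 ≤ nq)
    (h4 : 1 ≤ lm) (h5 : 1 ≤ T3) : PA * PB ≤ PA * nq * (PB * lm) * T3 := by
  have h0A : (0:ℝ) ≤ PA := by linarith
  have h0B : (0:ℝ) ≤ PB := by linarith
  have c1 : PA * PB ≤ PA * nq * (PB * lm) := by
    have d1 : PA * 1 ≤ PA * nq := by nlinarith
    have d2 : PB * 1 ≤ PB * lm := by nlinarith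
    calc PA * PB = (PA * 1) * (PB * 1) := by ring
      _ ≤ (PA * nq) * (PB * lm) := mul_le_mul d1 d2 (by linarith) (by nlinarith)
  have c2 : PA * nq * (PB * lm) ≤ PA * nq * (PB * lm) * T3 :=
    le_mul_of_one_le_right (by nlinarith) h5
  linarith



/-- Rationality and size bound for the optimal value of a disjoint bilinear
programming problem with integer data (Lemma 1 of the paper). -/
theorem stmt_3
    (n m q l : ℕ) (hn : 0 < n) (hm : 0 < m) (hq : 0 < q) (hl : 0 < l)
    (C : Matrix (Fin n) (Fin m) ℝ) (A : Matrix (Fin q) (Fin n) ℝ)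
    (B : Matrix (Fin l) (Fin m) ℝ)
    (a : Fin q → ℝ) (b : Fin l → ℝ) (g : Fin n → ℝ) (e : Fin m → ℝ)
    (hCint : ∀ i j, ∃ k : ℤ, C i j = (k : ℝ))
    (hAint : ∀ i j, ∃ k : ℤ, A i j = (k : ℝ))
    (hBint : ∀ i j, ∃ k : ℤ, B i j = (k : ℝ))
    (haint : ∀ i, ∃ k : ℤ, a i = (k : ℝ))
    (hbint : ∀ i, ∃ k : ℤ, b i = (k : ℝ))
    (hgint : ∀ i, ∃ k : ℤ, g i = (k : ℝ))
    (heint : ∀ j, ∃ k : ℤ, e j = (k : ℝ))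
    (z : (Fin n → ℝ) → (Fin m → ℝ) → ℝ)
    (hz : ∀ x y, z x y = x ⬝ᵥ C.mulVec y + g ⬝ᵥ x + e ⬝ᵥ y)
    (X : Set (Fin n → ℝ)) (Y : Set (Fin m → ℝ))
    (hX : X = {x | A.mulVec x ≤ a ∧ 0 ≤ x})
    (hY : Y = {y | B.mulVec y ≤ b ∧ 0 ≤ y})
    (hXne : X.Nonempty) (hYne : Y.Nonempty)
    (hXbd : Bornology.IsBounded X) (hYbd : Bornology.IsBounded Y)
    (H : ℝ)
    (hH : IsGreatest {t : ℝ | (∃ i j, t = |C i j|) ∨ (∃ i, t = |g i|) ∨ (∃ j, t = |e j|)} H)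
    (L₁ L₂ L : ℝ)
    (hL₁ : L₁ = (∑ i : Fin q,
        (Real.logb 2 (|a i| + 1) + ∑ j : Fin n, Real.logb 2 (|A i j| + 1))) +
        Real.logb 2 ((n : ℝ) * ((q : ℝ) + 1)))
    (hL₂ : L₂ = (∑ i : Fin l,
        (Real.logb 2 (|b i| + 1) + ∑ j : Fin m, Real.logb 2 (|B i j| + 1))) +
        Real.logb 2 ((l : ℝ) * ((m : ℝ) + 1)))
    (hL : L = L₁ + L₂ +
        ((q : ℝ) * (m : ℝ) + (q : ℝ) + (m : ℝ)) * (1 + Real.logb 2 (H + 1)))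
    (zstar : ℝ) (hzstar : IsLeast (Set.image2 z X Y) zstar) :
    ∃ M N : ℤ, 1 ≤ |N| ∧ (|M| : ℝ) ≤ (2 : ℝ) ^ L ∧ (|N| : ℝ) ≤ (2 : ℝ) ^ L ∧
      zstar = (M : ℝ) / (N : ℝ) := by
  classical
  -- basic facts about H
  have hH0 : 0 ≤ H := by
    rcases hH.1 with ⟨i, j, hij⟩ | ⟨i, hi⟩ | ⟨j, hj⟩
    · rw [hij]; exact abs_nonneg _
    · rw [hi]; exact abs_nonneg _
    · rw [hj]; exact abs_nonneg _
  have hHC : ∀ i j, |C i j| ≤ H := fun i j => hH.2 (Or.inl ⟨i, j, rfl⟩)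
  have hHg : ∀ i, |g i| ≤ H := fun i => hH.2 (Or.inr (Or.inl ⟨i, rfl⟩))
  have hHe : ∀ j, |e j| ≤ H := fun j => hH.2 (Or.inr (Or.inr ⟨j, rfl⟩))
  -- products
  set PA : ℝ := ∏ i, ((|a i| + 1) * ∏ j, (|A i j| + 1)) with hPA
  set PB : ℝ := ∏ i, ((|b i| + 1) * ∏ j, (|B i j| + 1)) with hPB
  have hPA1 : 1 ≤ PA := by
    apply one_le_prod_real
    intro i _
    have h1 : (1:ℝ) ≤ |a i| + 1 := by linarith [abs_nonneg (a i)]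
    have h2 : (1:ℝ) ≤ ∏ j, (|A i j| + 1) :=
      one_le_prod_real _ _ (fun j _ => by linarith [abs_nonneg (A i j)])
    calc (1:ℝ) = 1 * 1 := by ring
      _ ≤ (|a i| + 1) * ∏ j, (|A i j| + 1) := mul_le_mul h1 h2 zero_le_one (by linarith)
  have hPB1 : 1 ≤ PB := by
    apply one_le_prod_real
    intro i _
    have h1 : (1:ℝ) ≤ |b i| + 1 := by linarith [abs_nonneg (b i)]
    have h2 : (1:ℝ) ≤ ∏ j, (|B i j| + 1) :=
      one_le_prod_real _ _ (fun j _ => by linarith [abs_nonneg (B i j)])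
    calc (1:ℝ) = 1 * 1 := by ring
      _ ≤ (|b i| + 1) * ∏ j, (|B i j| + 1) := mul_le_mul h1 h2 zero_le_one (by linarith)
  -- cast positivity
  have hn1 : (1:ℝ) ≤ (n:ℝ) := by exact_mod_cast hn
  have hm1 : (1:ℝ) ≤ (m:ℝ) := by exact_mod_cast hm
  have hq1 : (1:ℝ) ≤ (q:ℝ) := by exact_mod_cast hq
  have hl1 : (1:ℝ) ≤ (l:ℝ) := by exact_mod_cast hl
  -- 2^L₁ and 2^L₂
  have h2L1 : (2:ℝ) ^ L₁ = PA * ((n : ℝ) * ((q : ℝ) + 1)) := by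
    rw [hL₁, Real.rpow_add two_pos]
    have hnq : (0:ℝ) < (n:ℝ) * ((q:ℝ) + 1) := mul_pos (by linarith) (by linarith)
    rw [rpow_logb_self _ hnq]
    congr 1
    have hstep : ∀ i : Fin q, Real.logb 2 (|a i| + 1) + ∑ j, Real.logb 2 (|A i j| + 1)
        = Real.logb 2 ((|a i| + 1) * ∏ j, (|A i j| + 1)) := by
      intro i
      rw [sum_logb_eq _ _ (fun j _ => by linarith [abs_nonneg (A i j)]),
        ← Real.logb_mul (by positivity)
          (ne_of_gt (lt_of_lt_of_le one_pos
            (one_le_prod_real _ _ (fun j _ => by linarith [abs_nonneg (A i j)]))))]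
    rw [Finset.sum_congr rfl (fun i _ => hstep i),
      sum_logb_eq _ _ (fun i _ => by
        have := one_le_prod_real Finset.univ (fun j => |A i j| + 1)
          (fun j _ => by linarith [abs_nonneg (A i j)])
        exact mul_pos (by linarith [abs_nonneg (a i)]) (by linarith))]
    rw [rpow_logb_self]
    rw [← hPA]
    linarith
  have h2L2 : (2:ℝ) ^ L₂ = PB * ((l : ℝ) * ((m : ℝ) + 1)) := by
    rw [hL₂, Real.rpow_add two_pos]
    have hnq : (0:ℝ) < (l:ℝ) * ((m:ℝ) + 1) := mul_pos (by linarith) (by linarith)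
    rw [rpow_logb_self _ hnq]
    congr 1
    have hstep : ∀ i : Fin l, Real.logb 2 (|b i| + 1) + ∑ j, Real.logb 2 (|B i j| + 1)
        = Real.logb 2 ((|b i| + 1) * ∏ j, (|B i j| + 1)) := by
      intro i
      rw [sum_logb_eq _ _ (fun j _ => by linarith [abs_nonneg (B i j)]),
        ← Real.logb_mul (by positivity)
          (ne_of_gt (lt_of_lt_of_le one_pos
            (one_le_prod_real _ _ (fun j _ => by linarith [abs_nonneg (B i j)]))))]
    rw [Finset.sum_congr rfl (fun i _ => hstep i),
      sum_logb_eq _ _ (fun i _ => by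
        have := one_le_prod_real Finset.univ (fun j => |B i j| + 1)
          (fun j _ => by linarith [abs_nonneg (B i j)])
        exact mul_pos (by linarith [abs_nonneg (b i)]) (by linarith))]
    rw [rpow_logb_self]
    rw [← hPB]
    linarith
  -- the third factor
  set c3 : ℝ := ((q : ℝ) * (m : ℝ) + (q : ℝ) + (m : ℝ)) * (1 + Real.logb 2 (H + 1)) with hc3
  have hT3eq : (2:ℝ) ^ c3 = (2 * (H + 1)) ^ ((q : ℝ) * (m : ℝ) + (q : ℝ) + (m : ℝ)) := by
    rw [hc3, mul_comm ((q : ℝ) * (m : ℝ) + (q : ℝ) + (m : ℝ)), Real.rpow_mul (le_of_lt two_pos)]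
    congr 1
    rw [Real.rpow_add two_pos, Real.rpow_one, rpow_logb_self _ (by linarith)]
  have hbase1 : (1:ℝ) ≤ 2 * (H + 1) := by linarith
  have hexp3 : (3:ℝ) ≤ (q : ℝ) * (m : ℝ) + (q : ℝ) + (m : ℝ) := by
    have hqm : (1:ℝ) ≤ (q:ℝ) * (m:ℝ) := by
      calc (1:ℝ) = 1 * 1 := by ring
        _ ≤ (q:ℝ) * (m:ℝ) := mul_le_mul hq1 hm1 zero_le_one (by linarith)
    linarith
  have hT3ge : 8 * (H + 1)^3 ≤ (2:ℝ) ^ c3 := by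
    rw [hT3eq]
    calc 8 * (H + 1)^3 = (2 * (H + 1)) ^ (3:ℕ) := by ring
      _ = (2 * (H + 1)) ^ ((3:ℕ):ℝ) := (Real.rpow_natCast _ 3).symm
      _ ≤ (2 * (H + 1)) ^ ((q : ℝ) * (m : ℝ) + (q : ℝ) + (m : ℝ)) := by
          apply Real.rpow_le_rpow_of_exponent_le hbase1
          push_cast
          exact hexp3
  have hT31 : (1:ℝ) ≤ (2:ℝ) ^ c3 := by linarith [hT3ge, helper_cube H hH0]
  have h2L : (2:ℝ) ^ L = (2:ℝ) ^ L₁ * (2:ℝ) ^ L₂ * (2:ℝ) ^ c3 := by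
    rw [hL, Real.rpow_add two_pos, Real.rpow_add two_pos, hc3]
  -- the optimum witnesses
  obtain ⟨x₀, hx₀X, y₀, hy₀Y, hz0⟩ := hzstar.1
  have hlb : ∀ x ∈ X, ∀ y ∈ Y, zstar ≤ z x y :=
    fun x hx y hy => hzstar.2 (Set.mem_image2_of_mem hx hy)
  -- minimize over X with y₀ fixed
  set cx : Fin n → ℝ := fun i => C.mulVec y₀ i + g i with hcx
  obtain ⟨xs, hxsX, hxsmin, D, hDne, hDle, hDp⟩ :=
    side_min A a hAint haint X hX hXne hXbd cx
  choose p hp hpb using hDp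
  have hzcx : ∀ x, z x y₀ = cx ⬝ᵥ x + e ⬝ᵥ y₀ := by
    intro x
    rw [hz]
    have h1 : cx ⬝ᵥ x = x ⬝ᵥ C.mulVec y₀ + g ⬝ᵥ x := by
      show ∑ i, (C.mulVec y₀ i + g i) * x i = ∑ i, x i * C.mulVec y₀ i + ∑ i, g i * x i
      rw [← Finset.sum_add_distrib]
      apply Finset.sum_congr rfl
      intro i _
      ring
    linarith
  have hzxs : z xs y₀ = zstar := by
    apply le_antisymm
    · have h1 := hxsmin x₀ hx₀X
      rw [← hz0, hzcx xs, hzcx x₀]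
      linarith
    · exact hlb xs hxsX y₀ hy₀Y
  -- minimize over Y with xs fixed
  set cy : Fin m → ℝ := fun j => Matrix.vecMul xs C j + e j with hcy
  obtain ⟨ys, hysY, hysmin, E, hEne, hEle, hEp⟩ :=
    side_min B b hBint hbint Y hY hYne hYbd cy
  choose s hs hsb using hEp
  have hzcy : ∀ y, z xs y = cy ⬝ᵥ y + g ⬝ᵥ xs := by
    intro y
    rw [hz]
    have h0 : xs ⬝ᵥ C.mulVec y = Matrix.vecMul xs C ⬝ᵥ y := Matrix.dotProduct_mulVec xs C y
    have h1 : cy ⬝ᵥ y = Matrix.vecMul xs C ⬝ᵥ y + e ⬝ᵥ y := by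
      show ∑ j, (Matrix.vecMul xs C j + e j) * y j
          = ∑ j, Matrix.vecMul xs C j * y j + ∑ j, e j * y j
      rw [← Finset.sum_add_distrib]
      apply Finset.sum_congr rfl
      intro j _
      ring
    linarith
  have hzys : z xs ys = zstar := by
    apply le_antisymm
    · have h1 := hysmin y₀ hy₀Y
      rw [← hzxs, hzcy ys, hzcy y₀]
      linarith
    · exact hlb xs hxsX ys hysY
  -- rational representation
  have hDr : (D:ℝ) ≠ 0 := Int.cast_ne_zero.mpr hDne
  have hEr : (E:ℝ) ≠ 0 := Int.cast_ne_zero.mpr hEne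
  have hxsD : ∀ i, (D:ℝ) * xs i = (p i : ℝ) := by
    intro i
    rw [hp i]
    field_simp
  have hysE : ∀ j, (E:ℝ) * ys j = (s j : ℝ) := by
    intro j
    rw [hs j]
    field_simp
  set S1 : ℝ := ∑ i, (p i : ℝ) * (∑ j, C i j * (s j : ℝ)) with hS1def
  set S2 : ℝ := ∑ i, g i * (p i : ℝ) with hS2def
  set S3 : ℝ := ∑ j, e j * (s j : ℝ) with hS3def
  have expand : zstar = ∑ i, xs i * (∑ j, C i j * ys j) + ∑ i, g i * xs i + ∑ j, e j * ys j := by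
    rw [← hzys, hz]
    rfl
  have claim1 : ∑ i, xs i * (∑ j, C i j * ys j) = S1 / ((D:ℝ) * (E:ℝ)) := by
    rw [eq_div_iff (mul_ne_zero hDr hEr), hS1def, Finset.sum_mul]
    apply Finset.sum_congr rfl
    intro i _
    have inner : (∑ j, C i j * ys j) * (E:ℝ) = ∑ j, C i j * (s j : ℝ) := by
      rw [Finset.sum_mul]
      apply Finset.sum_congr rfl
      intro j _
      calc C i j * ys j * (E:ℝ) = C i j * ((E:ℝ) * ys j) := by ring
        _ = C i j * (s j : ℝ) := by rw [hysE j]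
    calc xs i * (∑ j, C i j * ys j) * ((D:ℝ) * (E:ℝ))
        = ((D:ℝ) * xs i) * ((∑ j, C i j * ys j) * (E:ℝ)) := by ring
      _ = (p i : ℝ) * (∑ j, C i j * (s j : ℝ)) := by rw [hxsD i, inner]
  have claim2 : ∑ i, g i * xs i = S2 / (D:ℝ) := by
    rw [eq_div_iff hDr, hS2def, Finset.sum_mul]
    apply Finset.sum_congr rfl
    intro i _
    calc g i * xs i * (D:ℝ) = g i * ((D:ℝ) * xs i) := by ring
      _ = g i * (p i : ℝ) := by rw [hxsD i]
  have claim3 : ∑ j, e j * ys j = S3 / (E:ℝ) := by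
    rw [eq_div_iff hEr, hS3def, Finset.sum_mul]
    apply Finset.sum_congr rfl
    intro j _
    calc e j * ys j * (E:ℝ) = e j * ((E:ℝ) * ys j) := by ring
      _ = e j * (s j : ℝ) := by rw [hysE j]
  -- integer numerator
  choose Cz hCz using hCint
  choose gz hgz using hgint
  choose ez hez using heint
  set Mz : ℤ := (∑ i, p i * (∑ j, Cz i j * s j)) + (∑ i, gz i * p i) * E
      + (∑ j, ez j * s j) * D with hMzdef
  have hMzcast : (Mz : ℝ) = S1 + S2 * (E:ℝ) + S3 * (D:ℝ) := by
    rw [hMzdef]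
    push_cast
    rw [hS1def, hS2def, hS3def]
    congr 1
    · congr 1
      · apply Finset.sum_congr rfl
        intro i _
        congr 1
        apply Finset.sum_congr rfl
        intro j _
        rw [hCz i j]
      · rw [Finset.sum_mul, Finset.sum_mul]
        apply Finset.sum_congr rfl
        intro i _
        rw [hgz i]
    · rw [Finset.sum_mul, Finset.sum_mul]
      apply Finset.sum_congr rfl
      intro j _
      rw [hez j]
  have hvalue : zstar = (Mz : ℝ) / ((D * E : ℤ) : ℝ) := by
    have hcast : ((D * E : ℤ) : ℝ) = (D:ℝ) * (E:ℝ) := by push_cast; ring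
    rw [hcast, eq_div_iff (mul_ne_zero hDr hEr), expand, claim1, claim2, claim3, hMzcast]
    field_simp
  -- bounds
  have habsp : ∀ i, |(p i : ℝ)| ≤ PA := fun i => by rw [hPA]; exact hpb i
  have habss : ∀ j, |(s j : ℝ)| ≤ PB := fun j => by rw [hPB]; exact hsb j
  have habsD : |(D : ℝ)| ≤ PA := by rw [hPA]; exact hDle
  have habsE : |(E : ℝ)| ≤ PB := by rw [hPB]; exact hEle
  have hPA0 : (0:ℝ) ≤ PA := by linarith
  have hPB0 : (0:ℝ) ≤ PB := by linarith
  have hinner : ∀ i, |∑ j, C i j * (s j : ℝ)| ≤ (m:ℝ) * (H * PB) := by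
    intro i
    refine (Finset.abs_sum_le_sum_abs _ _).trans ?_
    calc ∑ j, |C i j * (s j : ℝ)| ≤ ∑ _j : Fin m, H * PB := by
          apply Finset.sum_le_sum
          intro j _
          rw [abs_mul]
          exact mul_le_mul (hHC i j) (habss j) (abs_nonneg _) hH0
      _ = (m:ℝ) * (H * PB) := by
          rw [Finset.sum_const, Finset.card_univ, Fintype.card_fin, nsmul_eq_mul]
  have hS1b : |S1| ≤ (n:ℝ) * (PA * ((m:ℝ) * (H * PB))) := by
    rw [hS1def]
    refine (Finset.abs_sum_le_sum_abs _ _).trans ?_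
    calc ∑ i, |(p i:ℝ) * (∑ j, C i j * (s j:ℝ))| ≤ ∑ _i : Fin n, PA * ((m:ℝ) * (H * PB)) := by
          apply Finset.sum_le_sum
          intro i _
          rw [abs_mul]
          exact mul_le_mul (habsp i) (hinner i) (abs_nonneg _) hPA0
      _ = (n:ℝ) * (PA * ((m:ℝ) * (H * PB))) := by
          rw [Finset.sum_const, Finset.card_univ, Fintype.card_fin, nsmul_eq_mul]
  have hS2b : |S2| ≤ (n:ℝ) * (H * PA) := by
    rw [hS2def]
    refine (Finset.abs_sum_le_sum_abs _ _).trans ?_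
    calc ∑ i, |g i * (p i:ℝ)| ≤ ∑ _i : Fin n, H * PA := by
          apply Finset.sum_le_sum
          intro i _
          rw [abs_mul]
          exact mul_le_mul (hHg i) (habsp i) (abs_nonneg _) hH0
      _ = (n:ℝ) * (H * PA) := by
          rw [Finset.sum_const, Finset.card_univ, Fintype.card_fin, nsmul_eq_mul]
  have hS3b : |S3| ≤ (m:ℝ) * (H * PB) := by
    rw [hS3def]
    refine (Finset.abs_sum_le_sum_abs _ _).trans ?_
    calc ∑ j, |e j * (s j:ℝ)| ≤ ∑ _j : Fin m, H * PB := by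
          apply Finset.sum_le_sum
          intro j _
          rw [abs_mul]
          exact mul_le_mul (hHe j) (habss j) (abs_nonneg _) hH0
      _ = (m:ℝ) * (H * PB) := by
          rw [Finset.sum_const, Finset.card_univ, Fintype.card_fin, nsmul_eq_mul]
  -- numerator bound
  have hMzb : |(Mz : ℝ)| ≤ PA * PB * (H * ((n:ℝ)*(m:ℝ) + (n:ℝ) + (m:ℝ))) := by
    rw [hMzcast]
    have h1 : |S1 + S2 * (E:ℝ) + S3 * (D:ℝ)| ≤ |S1| + |S2| * |(E:ℝ)| + |S3| * |(D:ℝ)| := by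
      calc |S1 + S2 * (E:ℝ) + S3 * (D:ℝ)| ≤ |S1 + S2 * (E:ℝ)| + |S3 * (D:ℝ)| := abs_add_le _ _
        _ ≤ |S1| + |S2 * (E:ℝ)| + |S3 * (D:ℝ)| := by linarith [abs_add_le S1 (S2 * (E:ℝ))]
        _ = |S1| + |S2| * |(E:ℝ)| + |S3| * |(D:ℝ)| := by rw [abs_mul, abs_mul]
    have h2 : |S2| * |(E:ℝ)| ≤ ((n:ℝ) * (H * PA)) * PB :=
      mul_le_mul hS2b habsE (abs_nonneg _)
        (mul_nonneg (by positivity) (mul_nonneg hH0 hPA0))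
    have h3 : |S3| * |(D:ℝ)| ≤ ((m:ℝ) * (H * PB)) * PA :=
      mul_le_mul hS3b habsD (abs_nonneg _)
        (mul_nonneg (by positivity) (mul_nonneg hH0 hPB0))
    have h4 : (n:ℝ) * (PA * ((m:ℝ) * (H * PB))) + ((n:ℝ) * (H * PA)) * PB
        + ((m:ℝ) * (H * PB)) * PA = PA * PB * (H * ((n:ℝ)*(m:ℝ) + (n:ℝ) + (m:ℝ))) := by
      ring
    linarith [h1, h2, h3, hS1b]
  -- key inequality
  have hkey : H * ((n:ℝ)*(m:ℝ) + (n:ℝ) + (m:ℝ))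
      ≤ ((n:ℝ) * ((q:ℝ)+1)) * ((l:ℝ) * ((m:ℝ)+1)) * ((2:ℝ) ^ c3) := by
    have a3 : 8*H + 8 ≤ (2:ℝ) ^ c3 := le_trans (helper_cube H hH0) hT3ge
    exact helper_key _ _ _ _ _ _ hn1 hm1 hq1 hl1 hH0 a3
  refine ⟨Mz, D * E, ?_, ?_, ?_, hvalue⟩
  · exact Int.one_le_abs (mul_ne_zero hDne hEne)
  · -- |Mz| ≤ 2^L
    rw [h2L, h2L1, h2L2]
    have h2 : |(Mz:ℝ)| ≤ PA * PB * (((n:ℝ) * ((q:ℝ)+1)) * ((l:ℝ) * ((m:ℝ)+1)) * ((2:ℝ) ^ c3)) := by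
      refine hMzb.trans ?_
      apply mul_le_mul_of_nonneg_left hkey (mul_nonneg hPA0 hPB0)
    calc |(Mz:ℝ)| ≤ PA * PB * (((n:ℝ) * ((q:ℝ)+1)) * ((l:ℝ) * ((m:ℝ)+1)) * ((2:ℝ) ^ c3)) := h2
      _ = PA * ((n:ℝ) * ((q:ℝ)+1)) * (PB * ((l:ℝ) * ((m:ℝ)+1))) * (2:ℝ)^c3 := by ring
  · -- |D*E| ≤ 2^L
    have h1 : |((D * E : ℤ) : ℝ)| = |(D:ℝ)| * |(E:ℝ)| := by push_cast; rw [abs_mul]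
    rw [h1, h2L, h2L1, h2L2]
    have h2 : |(D:ℝ)| * |(E:ℝ)| ≤ PA * PB :=
      mul_le_mul habsD habsE (abs_nonneg _) hPA0
    have hnq1 : (1:ℝ) ≤ (n:ℝ) * ((q:ℝ)+1) := by
      calc (1:ℝ) = 1 * 1 := by ring
        _ ≤ (n:ℝ) * ((q:ℝ)+1) := mul_le_mul hn1 (by linarith) zero_le_one (by linarith)
    have hlm1 : (1:ℝ) ≤ (l:ℝ) * ((m:ℝ)+1) := by
      calc (1:ℝ) = 1 * 1 := by ring
        _ ≤ (l:ℝ) * ((m:ℝ)+1) := mul_le_mul hl1 (by linarith) zero_le_one (by linarith)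
    have h3 := helper_NN PA PB ((n:ℝ)*((q:ℝ)+1)) ((l:ℝ)*((m:ℝ)+1)) ((2:ℝ)^c3)
      hPA1 hPB1 hnq1 hlm1 hT31
    linarith [h2, h3]
end

section
/- Assume X and Y are nonempty and bounded, and let h ∈ ℝ. Then the system {A x ≤ a, xᵀC y + g·x + e·y ≤ h, B y ≤ b, x ≥ 0, y ≥ 0} has no solution (x, y) if and only if for every y ∈ Y the system {−Aᵀu ≤ C y + g, a·u < e·y − h, u ≥ 0} has a solution u ∈ ℝ^q. -/
open Matrix

open Finset
open scoped RealInnerProductSpace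


open Finset

lemma carath {ι : Type*} [Fintype ι] [DecidableEq ι] {E : Type*} [AddCommGroup E] [Module ℝ E]
    (v : ι → E) (w : ι → ℝ) (hw : 0 ≤ w) :
    ∃ (s : Finset ι) (w' : ι → ℝ), 0 ≤ w' ∧ (∀ i ∉ s, w' i = 0) ∧
      LinearIndependent ℝ (fun i : s => v i) ∧ ∑ i, w' i • v i = ∑ i, w i • v i := by
  suffices H : ∀ N (w : ι → ℝ), 0 ≤ w → (univ.filter fun i => w i ≠ 0).card ≤ N →
      ∃ (s : Finset ι) (w' : ι → ℝ), 0 ≤ w' ∧ (∀ i ∉ s, w' i = 0) ∧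
      LinearIndependent ℝ (fun i : s => v i) ∧ ∑ i, w' i • v i = ∑ i, w i • v i from
    H _ w hw le_rfl
  intro N
  induction N with
  | zero =>
    intro w hw hcard
    refine ⟨∅, w, hw, fun i _ => ?_, linearIndependent_empty_type, rfl⟩
    by_contra hi
    have : i ∈ univ.filter fun i => w i ≠ 0 := by simp [hi]
    simp [Finset.card_eq_zero.mp (Nat.le_zero.mp hcard)] at this
  | succ N IH =>
    intro w hw hcard
    set s : Finset ι := univ.filter fun i => w i ≠ 0 with hs
    by_cases hind : LinearIndependent ℝ (fun i : s => v i)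
    · refine ⟨s, w, hw, fun i hi => ?_, hind, rfl⟩
      by_contra hne; exact hi (by simp [hs, hne])
    · obtain ⟨g, hgsum, j, hgj⟩ := Fintype.not_linearIndependent_iff.mp hind
      classical
      set c : ι → ℝ := fun i => if hi : i ∈ s then g ⟨i, hi⟩ else 0 with hc
      have hcsum : ∑ i, c i • v i = 0 := by
        rw [← Finset.sum_subset (Finset.subset_univ s) (f := fun i => c i • v i)
          (by intro i _ hi; simp [hc, hi])]
        rw [← Finset.sum_attach s (fun i => c i • v i)]
        simpa [hc] using hgsum
      have hcsupp : ∀ i, c i ≠ 0 → i ∈ s := by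
        intro i hi; by_contra hns; simp [hc, hns] at hi
      have hcj : c (j : ι) ≠ 0 := by
        have : c (j : ι) = g j := by simp [hc, j.2]
        rw [this]; exact hgj
      have hex : ∃ c : ι → ℝ, (∑ i, c i • v i = 0) ∧ (∀ i, c i ≠ 0 → i ∈ s) ∧ ∃ i, 0 < c i := by
        by_cases hpos : ∃ i, 0 < c i
        · exact ⟨c, hcsum, hcsupp, hpos⟩
        · push_neg at hpos
          refine ⟨-c, ?_, fun i hi => hcsupp i (by simpa using hi), ⟨j, ?_⟩⟩
          · simp only [Pi.neg_apply, neg_smul, Finset.sum_neg_distrib, hcsum, neg_zero]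
          · simp only [Pi.neg_apply, neg_pos]
            exact lt_of_le_of_ne (hpos _) hcj
      clear hcsum hcsupp hcj hgsum hgj hind
      obtain ⟨c, hcsum, hcsupp, i₁, hi₁⟩ := hex
      obtain ⟨i₀, hi₀P, hmin⟩ := Finset.exists_min_image (univ.filter fun i => 0 < c i)
        (fun i => w i / c i) ⟨i₁, by simp [hi₁]⟩
      have hci₀ : 0 < c i₀ := (Finset.mem_filter.mp hi₀P).2
      set t : ℝ := w i₀ / c i₀ with htdef
      have ht0 : 0 ≤ t := div_nonneg (hw i₀) hci₀.le
      set w' : ι → ℝ := fun i => w i - t * c i with hw'def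
      have hw' : 0 ≤ w' := by
        intro i
        by_cases hci : 0 < c i
        · have := hmin i (by simp [hci])
          have : t * c i ≤ w i := (le_div_iff₀ hci).mp this
          simpa [hw'def] using this
        · push_neg at hci
          have : t * c i ≤ 0 := mul_nonpos_of_nonneg_of_nonpos ht0 hci
          simpa [hw'def] using sub_nonneg.mpr (this.trans (hw i))
      have hsum' : ∑ i, w' i • v i = ∑ i, w i • v i := by
        simp only [hw'def, sub_smul, mul_smul, Finset.sum_sub_distrib]
        rw [← Finset.smul_sum, hcsum, smul_zero, sub_zero]
      have hsupp' : (univ.filter fun i => w' i ≠ 0) ⊆ s.erase i₀ := by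
        intro i hi
        simp only [Finset.mem_filter, Finset.mem_univ, true_and] at hi
        refine Finset.mem_erase.mpr ⟨?_, ?_⟩
        · rintro rfl
          apply hi
          simp [hw'def, htdef, div_mul_cancel₀ _ (ne_of_gt hci₀)]
        · by_contra hns
          have hwi : w i = 0 := by
            by_contra hwi; exact hns (by simp [hs, hwi])
          have hcineq : c i = 0 := by
            by_contra hcine; exact hns (hcsupp i hcine)
          exact hi (by simp [hw'def, hwi, hcineq])
      have hi₀s : i₀ ∈ s := hcsupp i₀ (ne_of_gt hci₀)
      have hcard' : (univ.filter fun i => w' i ≠ 0).card ≤ N := by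
        calc (univ.filter fun i => w' i ≠ 0).card ≤ (s.erase i₀).card :=
              Finset.card_le_card hsupp'
          _ = s.card - 1 := Finset.card_erase_of_mem hi₀s
          _ ≤ N := by omega
      obtain ⟨s', w'', h1, h2, h3, h4⟩ := IH w' hw' hcard'
      exact ⟨s', w'', h1, h2, h3, h4.trans hsum'⟩

open Finset

lemma cone_closed {ι : Type*} [Fintype ι] [DecidableEq ι] {E : Type*} [NormedAddCommGroup E]
    [NormedSpace ℝ E] (v : ι → E) :
    IsClosed {y : E | ∃ w : ι → ℝ, 0 ≤ w ∧ y = ∑ i, w i • v i} := by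
  classical
  have key : {y : E | ∃ w : ι → ℝ, 0 ≤ w ∧ y = ∑ i, w i • v i} =
      ⋃ s ∈ {s : Finset ι | LinearIndependent ℝ (fun i : s => v i)},
        (fun w : s → ℝ => ∑ i, w i • v (i : ι)) '' (Set.Ici 0) := by
    ext y
    simp only [Set.mem_setOf_eq, Set.mem_iUnion, Set.mem_image, Set.mem_Ici]
    constructor
    · rintro ⟨w, hw, rfl⟩
      obtain ⟨s, w', h1, h2, h3, h4⟩ := carath v w hw
      refine ⟨s, h3, fun i => w' i, fun i => h1 i, ?_⟩
      rw [← h4, ← Finset.sum_subset (Finset.subset_univ s)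
        (by intro i _ hi; simp [h2 i hi])]
      rw [Finset.univ_eq_attach]
      exact Finset.sum_attach s (fun i => w' i • v i)
    · rintro ⟨s, _, w, hw, rfl⟩
      refine ⟨fun i => if hi : i ∈ s then w ⟨i, hi⟩ else 0, ?_, ?_⟩
      · intro i; dsimp only; split
        · exact hw _
        · exact le_rfl
      · rw [← Finset.sum_subset (Finset.subset_univ s)
          (by intro i _ hi; simp [hi])]
        rw [← Finset.sum_attach s
          (fun i => (if hi : i ∈ s then w ⟨i, hi⟩ else 0) • v i)]
        apply Finset.sum_congr rfl
        intro i _; simp [i.2]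
  rw [key]
  apply Set.Finite.isClosed_biUnion (Set.toFinite _)
  intro s hs
  let φ : (s → ℝ) →ₗ[ℝ] E :=
    { toFun := fun w => ∑ i, w i • v (i : ι)
      map_add' := by intro w₁ w₂; simp [add_smul, Finset.sum_add_distrib]
      map_smul' := by intro r w; simp [mul_smul, Finset.smul_sum] }
  have hinj : Function.Injective φ := by
    rw [← LinearMap.ker_eq_bot, LinearMap.ker_eq_bot']
    intro w hwker
    exact funext (Fintype.linearIndependent_iff.mp hs w hwker)
  have hemb := LinearMap.isClosedEmbedding_of_injective (LinearMap.ker_eq_bot.mpr hinj) (f := φ)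
  exact hemb.isClosedMap _ isClosed_Ici

open Finset Matrix
open scoped RealInnerProductSpace

lemma farkas_s4 {p η : Type*} [Fintype p] [Fintype η] [DecidableEq p] [DecidableEq η]
    (M : Matrix p η ℝ) (d : p → ℝ)
    (hinfeas : ¬ ∃ x : η → ℝ, 0 ≤ x ∧ M.mulVec x ≤ d) :
    ∃ u : p → ℝ, 0 ≤ u ∧ 0 ≤ Mᵀ.mulVec u ∧ d ⬝ᵥ u < 0 := by
  classical
  set v : η ⊕ p → (p → ℝ) := Sum.elim (fun j => fun i => M i j) (fun i => Pi.single i 1) with hv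
  set K : Set (p → ℝ) := {y | ∃ w : η ⊕ p → ℝ, 0 ≤ w ∧ y = ∑ i, w i • v i} with hK
  have hKclosed : IsClosed K := cone_closed v
  -- sum decomposition
  have hsum : ∀ w : η ⊕ p → ℝ, ∑ i, w i • v i
      = M.mulVec (w ∘ Sum.inl) + (w ∘ Sum.inr) := by
    intro w
    rw [Fintype.sum_sum_type]
    funext i
    simp only [Pi.add_apply, Finset.sum_apply, Pi.smul_apply, smul_eq_mul, hv, Sum.elim_inl,
      Sum.elim_inr, Matrix.mulVec, dotProduct, Function.comp]
    congr 1
    · exact Finset.sum_congr rfl (fun j _ => mul_comm _ _)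
    · rw [Finset.sum_eq_single i]
      · simp
      · intro b _ hb; simp [Pi.single_apply, hb]
      · simp
  -- generators belong to K
  have hgen : ∀ i₀, v i₀ ∈ K := by
    intro i₀
    refine ⟨Pi.single i₀ 1, fun i => by simp only [Pi.single_apply]; split <;> norm_num, ?_⟩
    rw [Finset.sum_eq_single i₀]
    · simp
    · intro b _ hb; simp [Pi.single_apply, hb]
    · simp
  -- d ∉ K
  have hdK : d ∉ K := by
    rintro ⟨w, hwpos, hwd⟩
    apply hinfeas
    refine ⟨w ∘ Sum.inl, fun j => hwpos _, ?_⟩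
    rw [hwd, hsum]
    intro i
    simp only [Pi.add_apply, le_add_iff_nonneg_right]
    exact hwpos _
  -- move to EuclideanSpace
  let ψ := EuclideanSpace.equiv p ℝ
  let K' : ConvexCone ℝ (EuclideanSpace ℝ p) :=
    { carrier := (ψ : EuclideanSpace ℝ p → (p → ℝ)) ⁻¹' K
      smul_mem' := by
        rintro r hr x ⟨w, hw, hx⟩
        refine ⟨r • w, fun i => by simpa using mul_nonneg hr.le (hw i), ?_⟩
        have : ψ (r • x) = r • ψ x := by simp
        rw [this, hx, Finset.smul_sum]
        simp [smul_smul]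
      add_mem' := by
        rintro x ⟨w₁, hw₁, hx⟩ y ⟨w₂, hw₂, hy⟩
        refine ⟨w₁ + w₂, fun i => add_nonneg (hw₁ i) (hw₂ i), ?_⟩
        have : ψ (x + y) = ψ x + ψ y := by simp
        rw [this, hx, hy, ← Finset.sum_add_distrib]
        simp [add_smul] }
  have hne : ((K' : Set (EuclideanSpace ℝ p))).Nonempty := by
    refine ⟨0, ⟨0, le_rfl, by simp⟩⟩
  have hclosed : IsClosed ((K' : Set (EuclideanSpace ℝ p))) :=
    hKclosed.preimage (ψ : EuclideanSpace ℝ p ≃L[ℝ] (p → ℝ)).continuous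
  have hdnot : (ψ.symm d : EuclideanSpace ℝ p) ∉ K' := by
    intro hmem
    exact hdK (by have h' : ψ (ψ.symm d) ∈ K := hmem; simpa using h')
  obtain ⟨y, hy1, hy2⟩ :=
    ProperCone.hyperplane_separation' (x₀ := ψ.symm d)
      (⟨K'.toPointedCone (.of_nonempty_of_isClosed hne hclosed), hclosed⟩ :
        ProperCone ℝ (EuclideanSpace ℝ p)) hdnot
  set u : p → ℝ := ψ y with hu
  have hinner : ∀ z : EuclideanSpace ℝ p, (inner ℝ z y : ℝ) = ∑ i, ψ z i * u i := by
    intro z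
    simp [PiLp.inner_apply, RCLike.inner_apply, hu]
    exact Finset.sum_congr rfl (fun i _ => mul_comm _ _)
  have hmemK : ∀ z ∈ K, 0 ≤ ∑ i, z i * u i := by
    intro z hz
    have := hy1 (ψ.symm z) (show ψ (ψ.symm z) ∈ K by simpa using hz)
    rw [hinner] at this
    simpa using this
  refine ⟨u, ?_, ?_, ?_⟩
  · intro i
    have := hmemK _ (hgen (Sum.inr i))
    simp only [hv, Sum.elim_inr] at this
    rw [Finset.sum_eq_single i] at this
    · simpa using this
    · intro b _ hb; simp [Pi.single_apply, hb]
    · simp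
  · intro j
    have := hmemK _ (hgen (Sum.inl j))
    simpa [hv, Matrix.mulVec, dotProduct, Matrix.transpose_apply] using this
  · have : (inner ℝ (ψ.symm d : EuclideanSpace ℝ p) y : ℝ) = ∑ i, u i * d i := by
      simp [PiLp.inner_apply, RCLike.inner_apply, hu]
      rfl
    rw [this] at hy2
    simpa [dotProduct, mul_comm] using hy2

open Finset Matrix

lemma dot_mono {κ : Type*} [Fintype κ] {u v w : κ → ℝ} (hu : 0 ≤ u) (hvw : v ≤ w) :
    u ⬝ᵥ v ≤ u ⬝ᵥ w :=
  Finset.sum_le_sum fun i _ => mul_le_mul_of_nonneg_left (hvw i) (hu i)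


/-- Lemma 2 of the paper: inconsistency of the parametric bilinear system is
equivalent to consistency of the dual linear system for every `y ∈ Y`. -/
theorem stmt_4
    (n m q l : ℕ) (hn : 0 < n) (hm : 0 < m) (hq : 0 < q) (hl : 0 < l)
    (C : Matrix (Fin n) (Fin m) ℝ) (A : Matrix (Fin q) (Fin n) ℝ)
    (B : Matrix (Fin l) (Fin m) ℝ)
    (a : Fin q → ℝ) (b : Fin l → ℝ) (g : Fin n → ℝ) (e : Fin m → ℝ)
    (X : Set (Fin n → ℝ)) (Y : Set (Fin m → ℝ))
    (hX : X = {x | A.mulVec x ≤ a ∧ 0 ≤ x})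
    (hY : Y = {y | B.mulVec y ≤ b ∧ 0 ≤ y})
    (hXne : X.Nonempty) (hYne : Y.Nonempty)
    (hXbd : Bornology.IsBounded X) (hYbd : Bornology.IsBounded Y)
    (h : ℝ) :
    (¬ ∃ (x : Fin n → ℝ) (y : Fin m → ℝ),
        A.mulVec x ≤ a ∧ x ⬝ᵥ C.mulVec y + g ⬝ᵥ x + e ⬝ᵥ y ≤ h ∧
        B.mulVec y ≤ b ∧ 0 ≤ x ∧ 0 ≤ y) ↔
      (∀ y ∈ Y, ∃ u : Fin q → ℝ,
        -(Aᵀ.mulVec u) ≤ C.mulVec y + g ∧ a ⬝ᵥ u < e ⬝ᵥ y - h ∧ 0 ≤ u) := by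
  
  obtain ⟨x₀, hx₀⟩ := hXne
  rw [hX] at hx₀
  obtain ⟨hAx₀, hx₀0⟩ := hx₀
  constructor
  · intro hno y hy
    rw [hY] at hy
    obtain ⟨hBy, hy0⟩ := hy
    set c : Fin n → ℝ := C.mulVec y + g with hc
    set M : Matrix (Fin q ⊕ Unit) (Fin n) ℝ :=
      Matrix.of (Sum.elim (fun i j => A i j) (fun _ j => c j)) with hM
    set d : Fin q ⊕ Unit → ℝ := Sum.elim a (fun _ => h - e ⬝ᵥ y) with hd
    have hinfeas : ¬ ∃ x : Fin n → ℝ, 0 ≤ x ∧ M.mulVec x ≤ d := by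
      rintro ⟨x, hx0, hMx⟩
      apply hno
      refine ⟨x, y, fun i => hMx (Sum.inl i), ?_, hBy, hx0, hy0⟩
      have hcx : c ⬝ᵥ x ≤ h - e ⬝ᵥ y := hMx (Sum.inr ())
      have : c ⬝ᵥ x = C.mulVec y ⬝ᵥ x + g ⬝ᵥ x := by
        simp [hc, add_dotProduct]
      rw [this] at hcx
      rw [dotProduct_comm x (C.mulVec y)]
      linarith
    obtain ⟨u', hu'0, hMT, hdu⟩ := farkas_s4 M d hinfeas
    set u : Fin q → ℝ := fun i => u' (Sum.inl i) with hu
    set lam : ℝ := u' (Sum.inr ()) with hlam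
    have hMTj : ∀ j, 0 ≤ Aᵀ.mulVec u j + lam * c j := by
      intro j
      have := hMT j
      rw [Matrix.mulVec, dotProduct, Fintype.sum_sum_type] at this
      simpa [Matrix.mulVec, dotProduct, Matrix.transpose_apply, hM, hu, hlam,
        mul_comm] using this
    have hdu' : a ⬝ᵥ u + lam * (h - e ⬝ᵥ y) < 0 := by
      rw [dotProduct, Fintype.sum_sum_type] at hdu
      simpa [dotProduct, hd, hu, hlam, mul_comm] using hdu
    have hlam0 : 0 ≤ lam := hu'0 (Sum.inr ())
    rcases eq_or_lt_of_le hlam0 with hlz | hlpos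
    · -- lam = 0 : contradiction with nonemptiness of X
      exfalso
      have hau : a ⬝ᵥ u < 0 := by rw [← hlz] at hdu'; simpa using hdu'
      have h1 : 0 ≤ (Aᵀ.mulVec u) ⬝ᵥ x₀ := by
        rw [dotProduct]
        apply Finset.sum_nonneg
        intro j _
        have := hMTj j
        rw [← hlz] at this
        simp only [zero_mul, add_zero] at this
        exact mul_nonneg this (hx₀0 j)
      have h2 : (Aᵀ.mulVec u) ⬝ᵥ x₀ = u ⬝ᵥ A.mulVec x₀ := by
        rw [Matrix.mulVec_transpose, ← Matrix.dotProduct_mulVec]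
      have h3 : u ⬝ᵥ A.mulVec x₀ ≤ u ⬝ᵥ a :=
        dot_mono (fun i => hu'0 (Sum.inl i)) hAx₀
      rw [dotProduct_comm u a] at h3
      linarith [h1, h2 ▸ h1]
    · refine ⟨lam⁻¹ • u, ?_, ?_, ?_⟩
      · intro j
        have hmv : Aᵀ.mulVec (lam⁻¹ • u) j = lam⁻¹ * Aᵀ.mulVec u j := by
          simp [Matrix.mulVec_smul]
        rw [Pi.neg_apply, hmv]
        have := hMTj j
        have hle : -(lam⁻¹ * Aᵀ.mulVec u j) ≤ lam⁻¹ * (lam * c j) := by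
          rw [neg_le]
          have : -(lam * c j) ≤ Aᵀ.mulVec u j := by linarith
          calc -(lam⁻¹ * (lam * c j)) = lam⁻¹ * -(lam * c j) := by ring
            _ ≤ lam⁻¹ * Aᵀ.mulVec u j :=
              mul_le_mul_of_nonneg_left this (inv_nonneg.mpr hlam0)
        calc -(lam⁻¹ * Aᵀ.mulVec u j) ≤ lam⁻¹ * (lam * c j) := hle
          _ = c j := by field_simp
          _ = (C.mulVec y + g) j := by rw [hc]
      · have : a ⬝ᵥ (lam⁻¹ • u) = lam⁻¹ * (a ⬝ᵥ u) := by
          simp [dotProduct_smul]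
        rw [this]
        have hau : a ⬝ᵥ u < lam * (e ⬝ᵥ y - h) := by linarith
        calc lam⁻¹ * (a ⬝ᵥ u) < lam⁻¹ * (lam * (e ⬝ᵥ y - h)) :=
              mul_lt_mul_of_pos_left hau (inv_pos.mpr hlpos)
          _ = e ⬝ᵥ y - h := by field_simp
      · intro i
        exact mul_nonneg (inv_nonneg.mpr hlam0) (hu'0 (Sum.inl i))
  · rintro hdual ⟨x, y, hAx, hz, hBy, hx0, hy0⟩
    obtain ⟨u, hdualfeas, hdu, hu0⟩ := hdual y (by rw [hY]; exact ⟨hBy, hy0⟩)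
    have h1 : x ⬝ᵥ (-(Aᵀ.mulVec u)) ≤ x ⬝ᵥ (C.mulVec y + g) := dot_mono hx0 hdualfeas
    have h2 : (Aᵀ.mulVec u) ⬝ᵥ x = u ⬝ᵥ A.mulVec x := by
      rw [Matrix.mulVec_transpose, ← Matrix.dotProduct_mulVec]
    have h3 : u ⬝ᵥ A.mulVec x ≤ u ⬝ᵥ a := dot_mono hu0 hAx
    have h4 : x ⬝ᵥ (-(Aᵀ.mulVec u)) = -((Aᵀ.mulVec u) ⬝ᵥ x) := by
      rw [dotProduct_comm, neg_dotProduct]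
    have h5 : x ⬝ᵥ (C.mulVec y + g) = x ⬝ᵥ C.mulVec y + g ⬝ᵥ x := by
      rw [dotProduct_add, dotProduct_comm x g]
    have h6 : u ⬝ᵥ a = a ⬝ᵥ u := dotProduct_comm u a
    linarith
end
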